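/- arXiv:1108.4982 — 8 statements merged into one kernel-verified Lean document; each statement's English description precedes it below -/
import Mathlib

section
/- Let Φ be a real symmetric positive definite n×n matrix, Ψ a real symmetric m×m matrix, η a real number, B a real n×m matrix, and D a real p×m matrix. Then Ψ − η·I_m + Bᵀ Φ B + Dᵀ D ≺ 0 holds if and only if the symmetric block matrix with block rows [Ψ − η·I_m, Bᵀ, Dᵀ], [B, −Φ⁻¹, 0], [D, 0, −I_p] is negative definite. -/
open Matrix

/-- A real matrix is negative definite if its negation is positive definite. -/
def Matrix.NegDef {n : Type*} [Fintype n] (M : Matrix n n ℝ) : Prop := (-M).PosDef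

section Blocks

variable {R i1 i2 i3 i4 i5 i6 j1 j2 j3 j4 j5 j6 : Type*}

/-- Assemble a 3×3 block matrix from its blocks. -/
def blk3 (A11 : Matrix i1 j1 R) (A12 : Matrix i1 j2 R) (A13 : Matrix i1 j3 R)
    (A21 : Matrix i2 j1 R) (A22 : Matrix i2 j2 R) (A23 : Matrix i2 j3 R)
    (A31 : Matrix i3 j1 R) (A32 : Matrix i3 j2 R) (A33 : Matrix i3 j3 R) :
    Matrix (i1 ⊕ (i2 ⊕ i3)) (j1 ⊕ (j2 ⊕ j3)) R :=
  fromBlocks A11 (fromCols A12 A13) (fromRows A21 A31) (fromBlocks A22 A23 A32 A33)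

/-- Assemble a 4×4 block matrix from its blocks. -/
def blk4 (A11 : Matrix i1 j1 R) (A12 : Matrix i1 j2 R) (A13 : Matrix i1 j3 R) (A14 : Matrix i1 j4 R)
    (A21 : Matrix i2 j1 R) (A22 : Matrix i2 j2 R) (A23 : Matrix i2 j3 R) (A24 : Matrix i2 j4 R)
    (A31 : Matrix i3 j1 R) (A32 : Matrix i3 j2 R) (A33 : Matrix i3 j3 R) (A34 : Matrix i3 j4 R)
    (A41 : Matrix i4 j1 R) (A42 : Matrix i4 j2 R) (A43 : Matrix i4 j3 R) (A44 : Matrix i4 j4 R) :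
    Matrix (i1 ⊕ (i2 ⊕ (i3 ⊕ i4))) (j1 ⊕ (j2 ⊕ (j3 ⊕ j4))) R :=
  fromBlocks A11 (fromCols A12 (fromCols A13 A14))
    (fromRows A21 (fromRows A31 A41)) (blk3 A22 A23 A24 A32 A33 A34 A42 A43 A44)

/-- Assemble a 5×5 block matrix from its blocks. -/
def blk5 (A11 : Matrix i1 j1 R) (A12 : Matrix i1 j2 R) (A13 : Matrix i1 j3 R) (A14 : Matrix i1 j4 R)
    (A15 : Matrix i1 j5 R)
    (A21 : Matrix i2 j1 R) (A22 : Matrix i2 j2 R) (A23 : Matrix i2 j3 R) (A24 : Matrix i2 j4 R)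
    (A25 : Matrix i2 j5 R)
    (A31 : Matrix i3 j1 R) (A32 : Matrix i3 j2 R) (A33 : Matrix i3 j3 R) (A34 : Matrix i3 j4 R)
    (A35 : Matrix i3 j5 R)
    (A41 : Matrix i4 j1 R) (A42 : Matrix i4 j2 R) (A43 : Matrix i4 j3 R) (A44 : Matrix i4 j4 R)
    (A45 : Matrix i4 j5 R)
    (A51 : Matrix i5 j1 R) (A52 : Matrix i5 j2 R) (A53 : Matrix i5 j3 R) (A54 : Matrix i5 j4 R)
    (A55 : Matrix i5 j5 R) :
    Matrix (i1 ⊕ (i2 ⊕ (i3 ⊕ (i4 ⊕ i5)))) (j1 ⊕ (j2 ⊕ (j3 ⊕ (j4 ⊕ j5)))) R :=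
  fromBlocks A11 (fromCols A12 (fromCols A13 (fromCols A14 A15)))
    (fromRows A21 (fromRows A31 (fromRows A41 A51)))
    (blk4 A22 A23 A24 A25 A32 A33 A34 A35 A42 A43 A44 A45 A52 A53 A54 A55)

/-- Assemble a 6×6 block matrix from its blocks. -/
def blk6 (A11 : Matrix i1 j1 R) (A12 : Matrix i1 j2 R) (A13 : Matrix i1 j3 R) (A14 : Matrix i1 j4 R)
    (A15 : Matrix i1 j5 R) (A16 : Matrix i1 j6 R)
    (A21 : Matrix i2 j1 R) (A22 : Matrix i2 j2 R) (A23 : Matrix i2 j3 R) (A24 : Matrix i2 j4 R)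
    (A25 : Matrix i2 j5 R) (A26 : Matrix i2 j6 R)
    (A31 : Matrix i3 j1 R) (A32 : Matrix i3 j2 R) (A33 : Matrix i3 j3 R) (A34 : Matrix i3 j4 R)
    (A35 : Matrix i3 j5 R) (A36 : Matrix i3 j6 R)
    (A41 : Matrix i4 j1 R) (A42 : Matrix i4 j2 R) (A43 : Matrix i4 j3 R) (A44 : Matrix i4 j4 R)
    (A45 : Matrix i4 j5 R) (A46 : Matrix i4 j6 R)
    (A51 : Matrix i5 j1 R) (A52 : Matrix i5 j2 R) (A53 : Matrix i5 j3 R) (A54 : Matrix i5 j4 R)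
    (A55 : Matrix i5 j5 R) (A56 : Matrix i5 j6 R)
    (A61 : Matrix i6 j1 R) (A62 : Matrix i6 j2 R) (A63 : Matrix i6 j3 R) (A64 : Matrix i6 j4 R)
    (A65 : Matrix i6 j5 R) (A66 : Matrix i6 j6 R) :
    Matrix (i1 ⊕ (i2 ⊕ (i3 ⊕ (i4 ⊕ (i5 ⊕ i6))))) (j1 ⊕ (j2 ⊕ (j3 ⊕ (j4 ⊕ (j5 ⊕ j6))))) R :=
  fromBlocks A11 (fromCols A12 (fromCols A13 (fromCols A14 (fromCols A15 A16))))
    (fromRows A21 (fromRows A31 (fromRows A41 (fromRows A51 A61))))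
    (blk5 A22 A23 A24 A25 A26 A32 A33 A34 A35 A36 A42 A43 A44 A45 A46
      A52 A53 A54 A55 A56 A62 A63 A64 A65 A66)

end Blocks


section Aux
open scoped Matrix

/-- PosDef version of the Schur complement criterion (₂₂ block), over ℝ. -/
lemma posDef_fromBlocks₂₂' {m n : Type*} [Fintype m] [Fintype n] [DecidableEq n]
    (A : Matrix m m ℝ) (B : Matrix m n ℝ) {D : Matrix n n ℝ} (hD : D.PosDef) :
    (Matrix.fromBlocks A B Bᴴ D).PosDef ↔ (A - B * D⁻¹ * Bᴴ).PosDef := by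
  haveI : Invertible D := hD.isUnit.invertible
  rw [Matrix.posDef_iff_dotProduct_mulVec, Matrix.posDef_iff_dotProduct_mulVec,
    Matrix.IsHermitian.fromBlocks₂₂ A B hD.isHermitian]
  constructor
  · refine fun h => ⟨h.1, fun x hx => ?_⟩
    have hv : (Sum.elim x (-((D⁻¹ * Bᴴ) *ᵥ x)) : m ⊕ n → ℝ) ≠ 0 := by
      intro h0
      apply hx
      funext i
      exact congrFun h0 (Sum.inl i)
    have := h.2 hv
    rw [Matrix.dotProduct_mulVec,
      Matrix.schur_complement_eq₂₂ A B x (-((D⁻¹ * Bᴴ) *ᵥ x)) hD.isHermitian,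
      add_neg_cancel, dotProduct_zero, zero_add] at this
    rwa [Matrix.dotProduct_mulVec]
  · refine fun h => ⟨h.1, fun x hx => ?_⟩
    rw [Matrix.dotProduct_mulVec, ← Sum.elim_comp_inl_inr x,
      Matrix.schur_complement_eq₂₂ A B _ _ hD.isHermitian]
    by_cases hxl : x ∘ Sum.inl = 0
    · have hxr : x ∘ Sum.inr ≠ 0 := by
        intro h0
        apply hx
        funext i
        cases i with
        | inl i => exact congrFun hxl i
        | inr i => exact congrFun h0 i
      have h1 : (0:ℝ) < star ((D⁻¹ * Bᴴ) *ᵥ (x ∘ Sum.inl) + x ∘ Sum.inr) ᵥ*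
          D ⬝ᵥ ((D⁻¹ * Bᴴ) *ᵥ (x ∘ Sum.inl) + x ∘ Sum.inr) := by
        rw [← Matrix.dotProduct_mulVec]
        apply hD.dotProduct_mulVec_pos
        rw [hxl, Matrix.mulVec_zero, zero_add]
        exact hxr
      have h2 : star (x ∘ Sum.inl) ᵥ* (A - B * D⁻¹ * Bᴴ) ⬝ᵥ (x ∘ Sum.inl) = 0 := by
        rw [hxl]
        simp
      rw [h2, add_zero]
      exact h1
    · have h1 : (0:ℝ) ≤ star ((D⁻¹ * Bᴴ) *ᵥ (x ∘ Sum.inl) + x ∘ Sum.inr) ᵥ*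
          D ⬝ᵥ ((D⁻¹ * Bᴴ) *ᵥ (x ∘ Sum.inl) + x ∘ Sum.inr) := by
        rw [← Matrix.dotProduct_mulVec]
        exact (Matrix.posSemidef_iff_dotProduct_mulVec.mp hD.posSemidef).2 _
      have h2 : (0:ℝ) < star (x ∘ Sum.inl) ᵥ* (A - B * D⁻¹ * Bᴴ) ⬝ᵥ (x ∘ Sum.inl) := by
        rw [← Matrix.dotProduct_mulVec]
        exact h.2 hxl
      linarith

end Aux

/-- Schur complement form: `Ψ − η·I + BᵀΦB + DᵀD ≺ 0` iff the 3×3 block matrix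
`[[Ψ − η·I, Bᵀ, Dᵀ], [B, −Φ⁻¹, 0], [D, 0, −I]]` is negative definite. -/
theorem schur_3x3_negdef_iff
    (n m p : ℕ) (Φ : Matrix (Fin n) (Fin n) ℝ) (hΦs : Φ.IsSymm) (hΦ : Φ.PosDef)
    (Ψ : Matrix (Fin m) (Fin m) ℝ) (hΨs : Ψ.IsSymm) (η : ℝ)
    (B : Matrix (Fin n) (Fin m) ℝ) (D : Matrix (Fin p) (Fin m) ℝ) :
    (Ψ - η • (1 : Matrix (Fin m) (Fin m) ℝ) + Bᵀ * Φ * B + Dᵀ * D).NegDef ↔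
      (blk3 (Ψ - η • 1) Bᵀ Dᵀ
            B (-Φ⁻¹) 0
            D 0 (-1)).NegDef := by
  classical
  haveI : Invertible Φ := hΦ.isUnit.invertible
  set Bc : Matrix (Fin m) ((Fin n) ⊕ (Fin p)) ℝ := fromCols (-Bᵀ) (-Dᵀ) with hBc
  set Dq : Matrix ((Fin n) ⊕ (Fin p)) ((Fin n) ⊕ (Fin p)) ℝ := fromBlocks Φ⁻¹ 0 0 1 with hDq
  have hBcH : Bcᴴ = fromRows (-B) (-D) := by
    rw [hBc, conjTranspose_eq_transpose_of_trivial, transpose_fromCols,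
      transpose_neg, transpose_neg, transpose_transpose, transpose_transpose]
  have hDqPD : Dq.PosDef := by
    have h0 : ((0 : Matrix (Fin n) (Fin p) ℝ))ᴴ = 0 := by simp
    have := (posDef_fromBlocks₂₂' Φ⁻¹ (0 : Matrix (Fin n) (Fin p) ℝ)
      (Matrix.PosDef.one)).mpr (by simpa using hΦ.inv)
    rw [h0] at this
    exact this
  have hDqinv : Dq⁻¹ = fromBlocks Φ 0 0 1 := by
    apply Matrix.inv_eq_right_inv
    rw [hDq, fromBlocks_multiply]
    simp [Matrix.inv_mul_of_invertible Φ, ← fromBlocks_one]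
  have hBlk : -(blk3 (Ψ - η • 1) Bᵀ Dᵀ B (-Φ⁻¹) 0 D 0 (-1)) =
      fromBlocks (η • 1 - Ψ) Bc Bcᴴ Dq := by
    rw [hBcH, hBc, hDq]
    unfold blk3
    rw [fromBlocks_neg, fromCols_neg, fromRows_neg, fromBlocks_neg,
      neg_sub, neg_neg, neg_neg, neg_zero, neg_zero]
  have hSchur : (η • 1 - Ψ) - Bc * Dq⁻¹ * Bcᴴ =
      -(Ψ - η • (1 : Matrix (Fin m) (Fin m) ℝ) + Bᵀ * Φ * B + Dᵀ * D) := by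
    rw [hDqinv, hBcH, hBc, fromCols_mul_fromBlocks, fromCols_mul_fromRows]
    simp only [Matrix.neg_mul, Matrix.mul_neg, Matrix.mul_zero, Matrix.zero_mul,
      Matrix.mul_one, neg_neg, neg_zero, add_zero, zero_add]
    rw [Matrix.mul_assoc]
    abel
  unfold Matrix.NegDef
  rw [hBlk, posDef_fromBlocks₂₂' _ _ hDqPD, hSchur]
end

section
/- Let A be a real n×n matrix and Φ a real symmetric positive definite n×n matrix such that AᵀΦA − Φ is negative definite. Then every complex eigenvalue λ of A (i.e., every element of the spectrum of the complexification of A) satisfies |λ| < 1. -/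
open Matrix
open scoped ComplexOrder

lemma re_quad_map {n : ℕ} (M : Matrix (Fin n) (Fin n) ℝ) (x : Fin n → ℂ) :
    (star x ⬝ᵥ (M.map (algebraMap ℝ ℂ)) *ᵥ x).re
      = (fun i => (x i).re) ⬝ᵥ M *ᵥ (fun i => (x i).re)
        + (fun i => (x i).im) ⬝ᵥ M *ᵥ (fun i => (x i).im) := by
  simp only [dotProduct, mulVec, Pi.star_apply, map_apply, Complex.re_sum,
    Complex.mul_re, Complex.mul_im, Complex.star_def, Complex.conj_re, Complex.conj_im,
    Complex.coe_algebraMap, Complex.im_sum, Complex.ofReal_re, Complex.ofReal_im]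
  rw [← Finset.sum_add_distrib]
  refine Finset.sum_congr rfl fun i _ => ?_
  simp only [zero_mul, sub_zero, add_zero, neg_mul, sub_neg_eq_add]

lemma selfadj_quad_map {n : ℕ} {M : Matrix (Fin n) (Fin n) ℂ} (hM : M.IsHermitian)
    (x : Fin n → ℂ) : (star x ⬝ᵥ M *ᵥ x).im = 0 := by
  have : star x ⬝ᵥ M *ᵥ x = star (star x ⬝ᵥ M *ᵥ x) := by
    conv_lhs => rw [star_dotProduct, star_mulVec, hM.eq, ← dotProduct_mulVec]
  rw [Complex.star_def, eq_comm, Complex.conj_eq_iff_im] at this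
  exact this

lemma posDef_map {n : ℕ} {M : Matrix (Fin n) (Fin n) ℝ} (hM : M.PosDef) :
    (M.map (algebraMap ℝ ℂ)).PosDef := by
  have hherm : (M.map (algebraMap ℝ ℂ)).IsHermitian :=
    hM.1.map _ fun r => (Complex.conj_ofReal r).symm
  refine PosDef.of_dotProduct_mulVec_pos hherm fun x hx => ?_
  rw [Complex.lt_def]
  constructor
  · rw [Complex.zero_re, re_quad_map]
    rcases (by
      by_contra hc
      push_neg at hc
      apply hx
      funext i
      exact Complex.ext (congrFun hc.1 i) (congrFun hc.2 i)
      : (fun i => (x i).re) ≠ (0 : Fin n → ℝ) ∨ (fun i => (x i).im) ≠ 0) with ha | hb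
    · exact add_pos_of_pos_of_nonneg (hM.dotProduct_mulVec_pos ha) (by simpa using hM.posSemidef.dotProduct_mulVec_nonneg _)
    · exact add_pos_of_nonneg_of_pos (by simpa using hM.posSemidef.dotProduct_mulVec_nonneg _) (hM.dotProduct_mulVec_pos hb)
  · rw [Complex.zero_im, selfadj_quad_map hherm]

/-- Lyapunov criterion for Schur stability: if `AᵀΦA − Φ ≺ 0` for some symmetric positive
definite `Φ`, then every complex eigenvalue of `A` lies in the open unit disc. -/
theorem lyapunov_schur_stability
    (n : ℕ) (A Φ : Matrix (Fin n) (Fin n) ℝ) (hΦs : Φ.IsSymm) (hΦ : Φ.PosDef)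
    (h : (-(Aᵀ * Φ * A - Φ)).PosDef) :
    ∀ μ ∈ spectrum ℂ (A.map (algebraMap ℝ ℂ)), ‖μ‖ < 1 := by
  intro μ hμ
  set Ac := A.map (algebraMap ℝ ℂ) with hAcdef
  set Φc := Φ.map (algebraMap ℝ ℂ) with hΦcdef
  rw [← AlgEquiv.spectrum_eq (Matrix.toLinAlgEquiv' (R := ℂ) (n := Fin n)) Ac,
    ← Module.End.hasEigenvalue_iff_mem_spectrum] at hμ
  obtain ⟨v, hv⟩ := hμ.exists_hasEigenvector
  have hv0 : v ≠ 0 := hv.right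
  have hAv : Ac *ᵥ v = μ • v := by
    have := hv.apply_eq_smul
    simpa [Matrix.toLinAlgEquiv'_apply, Matrix.toLin'_apply] using this
  have hΦc : Φc.PosDef := posDef_map hΦ
  have hNc := posDef_map h
  have hmap : (-(Aᵀ * Φ * A - Φ)).map (algebraMap ℝ ℂ) = -(Acᵀ * Φc * Ac - Φc) := by
    ext i j
    simp only [Matrix.map_apply, Matrix.neg_apply, Matrix.sub_apply, Matrix.mul_apply,
      Matrix.transpose_apply, hAcdef, hΦcdef]
    push_cast
    ring
  rw [hmap] at hNc
  have hAcT : Acᵀ = Acᴴ := by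
    ext i j
    simp [hAcdef, conjTranspose_apply, Complex.conj_ofReal]
  set q : ℂ := star v ⬝ᵥ Φc *ᵥ v with hqdef
  have key : star v ⬝ᵥ (Acᵀ * Φc * Ac) *ᵥ v = (Complex.normSq μ : ℂ) * q := by
    rw [← mulVec_mulVec, ← mulVec_mulVec, hAcT, dotProduct_mulVec (star v),
      ← star_mulVec, hAv, mulVec_smul, star_smul, smul_dotProduct, dotProduct_smul]
    simp only [smul_eq_mul, ← mul_assoc, Complex.star_def, ← hqdef]
    rw [mul_comm ((starRingEnd ℂ) μ) μ, Complex.mul_conj]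
  have hq : 0 < q := hΦc.dotProduct_mulVec_pos hv0
  have hpos := hNc.dotProduct_mulVec_pos hv0
  rw [neg_mulVec, dotProduct_neg, sub_mulVec, dotProduct_sub, key] at hpos
  rw [Complex.lt_def] at hq hpos
  have hqim : q.im = 0 := hq.2.symm
  have hre : (0:ℝ) < (1 - Complex.normSq μ) * q.re := by
    have := hpos.1
    simp only [Complex.zero_re, Complex.neg_re, Complex.sub_re, Complex.mul_re,
      Complex.ofReal_re, Complex.ofReal_im, hqim, mul_zero, zero_mul, sub_zero] at this
    linarith
  have hns : Complex.normSq μ < 1 := by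
    have hq0 : 0 < q.re := by simpa using hq.1
    nlinarith
  have := Complex.sq_norm μ
  nlinarith [norm_nonneg μ]
end

section
/- Let Φ be a real symmetric positive definite n×n matrix, η a real number, 𝒜 a real n×n matrix, ℬ a real n×m matrix, 𝒞 a real p×n matrix, and 𝒟 a real p×m matrix. If the symmetric 4×4 block matrix with block rows [−Φ, 0, 𝒜ᵀ, 𝒞ᵀ], [0, −η·I_m, ℬᵀ, 𝒟ᵀ], [𝒜, ℬ, −Φ⁻¹, 0], [𝒞, 𝒟, 0, −I_p] is negative definite, then every complex eigenvalue λ of 𝒜 satisfies |λ| < 1. -/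
open Matrix

/-- If the 4×4 block LMI of the strict anisotropic norm bounded real lemma is feasible,
then the state matrix `𝒜` is Schur stable. -/
theorem lmi_4x4_implies_schur_stable
    (n m p : ℕ) (Φ : Matrix (Fin n) (Fin n) ℝ) (hΦs : Φ.IsSymm) (hΦ : Φ.PosDef) (η : ℝ)
    (A : Matrix (Fin n) (Fin n) ℝ) (B : Matrix (Fin n) (Fin m) ℝ)
    (C : Matrix (Fin p) (Fin n) ℝ) (D : Matrix (Fin p) (Fin m) ℝ)
    (h : (blk4 (-Φ) 0 Aᵀ Cᵀ
               0 ((-η) • 1 : Matrix (Fin m) (Fin m) ℝ) Bᵀ Dᵀ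
               A B (-Φ⁻¹) 0
               C D 0 (-1)).NegDef) :
    ∀ μ ∈ spectrum ℂ (A.map (algebraMap ℝ ℂ)), ‖μ‖ < 1 := by

  -- Step 1: the Lyapunov matrix is positive definite
  have hP : (Φ - Aᵀ * Φ * A).PosDef := by
    refine Matrix.PosDef.of_dotProduct_mulVec_pos ?_ ?_
    · have h1 : (Φ - Aᵀ * Φ * A)ᵀ = Φ - Aᵀ * Φ * A := by
        rw [transpose_sub, transpose_mul, transpose_mul, transpose_transpose, hΦs.eq, mul_assoc]
      unfold Matrix.IsHermitian; rw [conjTranspose_eq_transpose_of_trivial]; exact h1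
    · intro x hx
      set y : Fin n → ℝ := Φ *ᵥ (A *ᵥ x) with hy
      set z : (Fin n) ⊕ ((Fin m) ⊕ ((Fin n) ⊕ (Fin p))) → ℝ :=
        Sum.elim x (Sum.elim 0 (Sum.elim y 0)) with hz
      have hzne : z ≠ 0 := by
        intro hc
        apply hx
        funext i
        have := congrFun hc (Sum.inl i)
        simpa [hz] using this
      have hpos := Matrix.PosDef.dotProduct_mulVec_pos h hzne
      have hΦinv : Φ⁻¹ *ᵥ y = A *ᵥ x := by
        rw [hy, mulVec_mulVec, Matrix.nonsing_inv_mul _ (isUnit_iff_ne_zero.mpr hΦ.det_pos.ne')]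
        simp
      simp only [hz, blk4, blk3, star_trivial, neg_mulVec, fromBlocks_mulVec,
        fromCols_mulVec_sumElim, fromRows_mulVec, mulVec_zero, zero_mulVec,
        add_zero, zero_add, dotProduct_neg, sumElim_dotProduct_sumElim,
        neg_mulVec, hΦinv, Sum.elim_comp_inl, Sum.elim_comp_inr, Sum.elim_add_add,
        dotProduct_add, add_dotProduct, dotProduct_zero, zero_dotProduct] at hpos
      have key : x ⬝ᵥ Aᵀ *ᵥ y = x ⬝ᵥ (Aᵀ * Φ * A) *ᵥ x := by
        rw [hy, mulVec_mulVec, mulVec_mulVec]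
      rw [key] at hpos
      simp only [star_trivial, sub_mulVec, dotProduct_sub]
      linarith
  -- Step 2: eigenvector
  intro mu hmu
  set M : Matrix (Fin n) (Fin n) ℂ := A.map (algebraMap ℝ ℂ) with hM
  obtain ⟨v, hv, hMv⟩ : ∃ v : Fin n → ℂ, v ≠ 0 ∧ M *ᵥ v = mu • v := by
    rw [spectrum.mem_iff, Matrix.isUnit_iff_isUnit_det] at hmu
    have hdet : ((algebraMap ℂ (Matrix (Fin n) (Fin n) ℂ)) mu - M).det = 0 := by
      by_contra hd; exact hmu (isUnit_iff_ne_zero.mpr hd)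
    obtain ⟨v, hvne, hveq⟩ := (Matrix.exists_mulVec_eq_zero_iff).mpr hdet
    refine ⟨v, hvne, ?_⟩
    rw [sub_mulVec] at hveq
    have h1 : (algebraMap ℂ (Matrix (Fin n) (Fin n) ℂ)) mu *ᵥ v = mu • v := by
      simp [Algebra.algebraMap_eq_smul_one, smul_mulVec]
    rw [h1] at hveq
    exact (sub_eq_zero.mp hveq).symm
  set a : Fin n → ℝ := fun i => (v i).re with ha
  set b : Fin n → ℝ := fun i => (v i).im with hb
  set r : ℝ := mu.re with hr
  set s : ℝ := mu.im with hs
  have hcomp : ∀ i, (M *ᵥ v) i = mu * v i := fun i => congrFun hMv i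
  have hA_a : A *ᵥ a = r • a - s • b := by
    funext i
    have := congrArg Complex.re (hcomp i)
    simp only [hM, mulVec, dotProduct, Complex.re_sum, Complex.mul_re, map_apply,
      Complex.coe_algebraMap, Complex.ofReal_re, Complex.ofReal_im,
      zero_mul, sub_zero] at this
    simp only [ha, hb, hr, hs, Pi.sub_apply, Pi.smul_apply, smul_eq_mul,
      mulVec, dotProduct]
    linarith
  have hA_b : A *ᵥ b = s • a + r • b := by
    funext i
    have := congrArg Complex.im (hcomp i)
    simp only [hM, mulVec, dotProduct, Complex.im_sum, Complex.mul_im, map_apply,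
      Complex.coe_algebraMap, Complex.ofReal_re, Complex.ofReal_im,
      zero_mul, add_zero] at this
    simp only [ha, hb, hr, hs, Pi.add_apply, Pi.smul_apply, smul_eq_mul,
      mulVec, dotProduct]
    linarith
  -- Step 3: quadratic form computations
  have hQform : ∀ x : Fin n → ℝ, x ⬝ᵥ (Aᵀ * Φ * A) *ᵥ x = (A *ᵥ x) ⬝ᵥ Φ *ᵥ (A *ᵥ x) := by
    intro x
    rw [← mulVec_mulVec, ← mulVec_mulVec, dotProduct_mulVec x Aᵀ, vecMul_transpose]
  have hab : a ≠ 0 ∨ b ≠ 0 := by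
    by_contra hc
    push_neg at hc
    apply hv
    funext i
    have h1 := congrFun hc.1 i
    have h2 := congrFun hc.2 i
    simp only [ha, hb, Pi.zero_apply] at h1 h2
    exact Complex.ext h1 h2
  have haa : 0 ≤ a ⬝ᵥ Φ *ᵥ a := by simpa using hΦ.posSemidef.dotProduct_mulVec_nonneg a
  have hbb : 0 ≤ b ⬝ᵥ Φ *ᵥ b := by simpa using hΦ.posSemidef.dotProduct_mulVec_nonneg b
  have hQpos : 0 < a ⬝ᵥ Φ *ᵥ a + b ⬝ᵥ Φ *ᵥ b := by
    rcases hab with hA' | hB'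
    · have := hΦ.dotProduct_mulVec_pos hA'
      simp only [star_trivial] at this
      linarith
    · have := hΦ.dotProduct_mulVec_pos hB'
      simp only [star_trivial] at this
      linarith
  have hPa : 0 ≤ a ⬝ᵥ Φ *ᵥ a - (A *ᵥ a) ⬝ᵥ Φ *ᵥ (A *ᵥ a) := by
    have := hP.posSemidef.dotProduct_mulVec_nonneg a
    simp only [star_trivial, sub_mulVec, dotProduct_sub, hQform] at this
    linarith
  have hPb : 0 ≤ b ⬝ᵥ Φ *ᵥ b - (A *ᵥ b) ⬝ᵥ Φ *ᵥ (A *ᵥ b) := by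
    have := hP.posSemidef.dotProduct_mulVec_nonneg b
    simp only [star_trivial, sub_mulVec, dotProduct_sub, hQform] at this
    linarith
  have hPpos : 0 < (a ⬝ᵥ Φ *ᵥ a - (A *ᵥ a) ⬝ᵥ Φ *ᵥ (A *ᵥ a))
      + (b ⬝ᵥ Φ *ᵥ b - (A *ᵥ b) ⬝ᵥ Φ *ᵥ (A *ᵥ b)) := by
    rcases hab with hA' | hB'
    · have := hP.dotProduct_mulVec_pos hA'
      simp only [star_trivial, sub_mulVec, dotProduct_sub, hQform] at this
      linarith
    · have := hP.dotProduct_mulVec_pos hB'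
      simp only [star_trivial, sub_mulVec, dotProduct_sub, hQform] at this
      linarith
  have expand : (A *ᵥ a) ⬝ᵥ Φ *ᵥ (A *ᵥ a) + (A *ᵥ b) ⬝ᵥ Φ *ᵥ (A *ᵥ b)
      = (r ^ 2 + s ^ 2) * (a ⬝ᵥ Φ *ᵥ a + b ⬝ᵥ Φ *ᵥ b) := by
    rw [hA_a, hA_b]
    simp only [mulVec_add, mulVec_sub, mulVec_smul, dotProduct_add, add_dotProduct,
      dotProduct_sub, sub_dotProduct, dotProduct_smul, smul_dotProduct, smul_eq_mul]
    ring
  have habs : ‖mu‖ ^ 2 = r ^ 2 + s ^ 2 := by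
    rw [Complex.sq_norm, Complex.normSq_apply, hr, hs]; ring
  have h1 : (r ^ 2 + s ^ 2) * (a ⬝ᵥ Φ *ᵥ a + b ⬝ᵥ Φ *ᵥ b)
      < a ⬝ᵥ Φ *ᵥ a + b ⬝ᵥ Φ *ᵥ b := by rw [← expand]; linarith
  have hk : r ^ 2 + s ^ 2 < 1 := by
    by_contra hc
    push_neg at hc
    nlinarith
  nlinarith [norm_nonneg mu, habs, hk]
end

section
/- Let A be a real n×n matrix, B_w a real n×m matrix, B_u a real n×q matrix, C_z a real p×n matrix, D_zw a real p×m matrix, D_zu a real p×q matrix, η a real number, Ψ a real symmetric positive definite m×m matrix, Π a real symmetric positive definite n×n matrix, and Λ a real q×n matrix. Suppose that the symmetric block matrix with block rows [Ψ − η·I_m, B_wᵀ, D_zwᵀ], [B_w, −Π, 0], [D_zw, 0, −I_p] is negative definite and that the symmetric block matrix with block rows [−Π, 0, (AΠ + B_uΛ)ᵀ, (C_zΠ + D_zuΛ)ᵀ], [0, −η·I_m, B_wᵀ, D_zwᵀ], [AΠ + B_uΛ, B_w, −Π, 0], [C_zΠ + D_zuΛ, D_zw, 0, −I_p] is negative definite.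 Then, with K := ΛΠ⁻¹ and Φ := Π⁻¹, the symmetric block matrix with block rows [−Φ, 0, (A + B_uK)ᵀ, (C_z + D_zuK)ᵀ], [0, −η·I_m, B_wᵀ, D_zwᵀ], [A + B_uK, B_w, −Φ⁻¹, 0], [C_z + D_zuK, D_zw, 0, −I_p] is negative definite. -/
open Matrix

lemma posDef_conj_transpose {n : Type*} [Fintype n] [DecidableEq n]
    {M : Matrix n n ℝ} (hM : M.PosDef) (B : Matrix n n ℝ) (hB : IsUnit B) :
    (Bᵀ * M * B).PosDef := by
  have hinj : Function.Injective B.mulVec :=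
    mulVec_injective_iff_isUnit.2 hB
  simpa using hM.conjTranspose_mul_mul_same hinj

/-- Static state-feedback synthesis: feasibility of the synthesis LMIs in `(Ψ, Π, Λ, η)` yields
the analysis LMI for the closed-loop realization with gain `K = ΛΠ⁻¹` and `Φ = Π⁻¹`.
Here `Pi` plays the role of `Π`. -/
theorem state_feedback_synthesis
    (n m p q : ℕ) (A : Matrix (Fin n) (Fin n) ℝ) (Bw : Matrix (Fin n) (Fin m) ℝ)
    (Bu : Matrix (Fin n) (Fin q) ℝ) (Cz : Matrix (Fin p) (Fin n) ℝ)
    (Dzw : Matrix (Fin p) (Fin m) ℝ) (Dzu : Matrix (Fin p) (Fin q) ℝ) (η : ℝ)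
    (Ψ : Matrix (Fin m) (Fin m) ℝ) (hΨs : Ψ.IsSymm) (hΨ : Ψ.PosDef)
    (Pi : Matrix (Fin n) (Fin n) ℝ) (hPis : Pi.IsSymm) (hPi : Pi.PosDef)
    (Λ : Matrix (Fin q) (Fin n) ℝ)
    (h1 : (blk3 (Ψ - η • 1) Bwᵀ Dzwᵀ
                Bw (-Pi) 0
                Dzw 0 (-1)).NegDef)
    (h2 : (blk4 (-Pi) 0 (A * Pi + Bu * Λ)ᵀ (Cz * Pi + Dzu * Λ)ᵀ
                0 ((-η) • 1 : Matrix (Fin m) (Fin m) ℝ) Bwᵀ Dzwᵀ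
                (A * Pi + Bu * Λ) Bw (-Pi) 0
                (Cz * Pi + Dzu * Λ) Dzw 0 (-1)).NegDef)
    (K : Matrix (Fin q) (Fin n) ℝ) (hK : K = Λ * Pi⁻¹)
    (Φ : Matrix (Fin n) (Fin n) ℝ) (hΦ : Φ = Pi⁻¹) :
    (blk4 (-Φ) 0 (A + Bu * K)ᵀ (Cz + Dzu * K)ᵀ
          0 ((-η) • 1 : Matrix (Fin m) (Fin m) ℝ) Bwᵀ Dzwᵀ
          (A + Bu * K) Bw (-Φ⁻¹) 0
          (Cz + Dzu * K) Dzw 0 (-1)).NegDef := by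
  have hPiU : IsUnit Pi := hPi.isUnit
  have hdet : IsUnit Pi.det := (Matrix.isUnit_iff_isUnit_det Pi).mp hPiU
  have hmul : Pi * Pi⁻¹ = 1 := Matrix.mul_nonsing_inv Pi hdet
  have hmul' : Pi⁻¹ * Pi = 1 := Matrix.nonsing_inv_mul Pi hdet
  have hPt : Pi⁻¹ᵀ = Pi⁻¹ := by rw [Matrix.transpose_nonsing_inv, hPis.eq]
  have hΦinv : Φ⁻¹ = Pi := by rw [hΦ, Matrix.nonsing_inv_nonsing_inv Pi hdet]
  -- the congruence transformation T = diag(Pi⁻¹, 1)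
  set T : Matrix ((Fin n) ⊕ ((Fin m) ⊕ ((Fin n) ⊕ (Fin p))))
      ((Fin n) ⊕ ((Fin m) ⊕ ((Fin n) ⊕ (Fin p)))) ℝ :=
    fromBlocks Pi⁻¹ 0 0 1 with hT
  have hTU : IsUnit T := by
    rw [Matrix.isUnit_iff_isUnit_det, hT, Matrix.det_fromBlocks_zero₂₁]
    simpa using Matrix.isUnit_nonsing_inv_det Pi hdet
  have key : (blk4 (-Φ) 0 (A + Bu * K)ᵀ (Cz + Dzu * K)ᵀ
          0 ((-η) • 1 : Matrix (Fin m) (Fin m) ℝ) Bwᵀ Dzwᵀ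
          (A + Bu * K) Bw (-Φ⁻¹) 0
          (Cz + Dzu * K) Dzw 0 (-1)) =
      Tᵀ * (blk4 (-Pi) 0 (A * Pi + Bu * Λ)ᵀ (Cz * Pi + Dzu * Λ)ᵀ
                0 ((-η) • 1 : Matrix (Fin m) (Fin m) ℝ) Bwᵀ Dzwᵀ
                (A * Pi + Bu * Λ) Bw (-Pi) 0
                (Cz * Pi + Dzu * Λ) Dzw 0 (-1)) * T := by
    have hAc : (A * Pi + Bu * Λ) * Pi⁻¹ = A + Bu * K := by
      rw [hK, Matrix.add_mul, Matrix.mul_assoc, Matrix.mul_assoc, hmul, Matrix.mul_one]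
    have hCc : (Cz * Pi + Dzu * Λ) * Pi⁻¹ = Cz + Dzu * K := by
      rw [hK, Matrix.add_mul, Matrix.mul_assoc, Matrix.mul_assoc, hmul, Matrix.mul_one]
    have hAt : Pi⁻¹ * (A * Pi + Bu * Λ)ᵀ = (A + Bu * K)ᵀ := by
      rw [← hAc, Matrix.transpose_mul, hPt]
    have hCt : Pi⁻¹ * (Cz * Pi + Dzu * Λ)ᵀ = (Cz + Dzu * K)ᵀ := by
      rw [← hCc, Matrix.transpose_mul, hPt]
    have hPP : Pi⁻¹ * -Pi * Pi⁻¹ = -Pi⁻¹ := by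
      rw [Matrix.mul_neg, hmul', Matrix.neg_mul, Matrix.one_mul]
    rw [hT, hΦinv, hΦ]
    unfold blk4 blk3
    rw [Matrix.fromBlocks_transpose]
    simp only [Matrix.fromBlocks_multiply, Matrix.mul_fromCols, Matrix.fromRows_mul,
      Matrix.mul_zero, Matrix.zero_mul, Matrix.mul_one, Matrix.one_mul,
      add_zero, zero_add, Matrix.transpose_zero, Matrix.transpose_one,
      hPt, hAt, hCt, hAc, hCc, hPP]
  show (-(blk4 _ _ _ _ _ _ _ _ _ _ _ _ _ _ _ _)).PosDef
  rw [key, ← Matrix.neg_mul, ← Matrix.mul_neg (Tᵀ)]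
  exact posDef_conj_transpose h2 T hTU
end

section
/- Let A be a real n×n matrix, B_w a real n×m matrix, B_u a real n×q matrix, C_z a real p×n matrix, D_zw a real p×m matrix, D_zu a real p×q matrix, η a real number, Ψ a real symmetric positive definite m×m matrix, Π a real symmetric positive definite n×n matrix, and Λ a real q×n matrix. Suppose that the symmetric block matrix with block rows [−Π, 0, (AΠ + B_uΛ)ᵀ, (C_zΠ + D_zuΛ)ᵀ], [0, −η·I_m, B_wᵀ, D_zwᵀ], [AΠ + B_uΛ, B_w, −Π, 0], [C_zΠ + D_zuΛ, D_zw, 0, −I_p] is negative definite. Then every complex eigenvalue λ of A + B_uΛΠ⁻¹ satisfies |λ| < 1 (the state-feedback gain K = ΛΠ⁻¹ internally stabilizes the closed-loop system). -/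
open Matrix

lemma extract13 {n' m' p' : Type*} [Fintype n'] [Fintype m'] [Fintype p'] [DecidableEq n'] [DecidableEq m'] [DecidableEq p']
    {Pi : Matrix n' n' ℝ} {M : Matrix n' n' ℝ} {N : Matrix p' n' ℝ}
    {Bw : Matrix n' m' ℝ} {Dzw : Matrix p' m' ℝ} {η : ℝ}
    (hPis : Pi.IsSymm)
    (h : (blk4 (-Pi) 0 Mᵀ Nᵀ
               0 ((-η) • 1 : Matrix m' m' ℝ) Bwᵀ Dzwᵀ
               M Bw (-Pi) 0
               N Dzw 0 (-1)).NegDef) :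
    (fromBlocks Pi (-Mᵀ) (-M) Pi).PosDef := by
  refine Matrix.PosDef.of_dotProduct_mulVec_pos ?_ ?_
  · show _ = _
    rw [fromBlocks_conjTranspose]
    simp [hPis.eq]
  · intro y hy
    set x1 : n' → ℝ := y ∘ Sum.inl with hx1
    set x3 : n' → ℝ := y ∘ Sum.inr with hx3
    set z : n' ⊕ (m' ⊕ (n' ⊕ p')) → ℝ :=
      Sum.elim x1 (Sum.elim 0 (Sum.elim x3 0)) with hz
    have hz0 : z ≠ 0 := by
      intro hc
      apply hy
      funext i
      cases i with
      | inl i => exact congrFun hc (Sum.inl i)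
      | inr i => exact congrFun hc (Sum.inr (Sum.inr (Sum.inl i)))
    have hpos := Matrix.PosDef.dotProduct_mulVec_pos h hz0
    have key : star z ⬝ᵥ (-(blk4 (-Pi) 0 Mᵀ Nᵀ
               0 ((-η) • 1 : Matrix m' m' ℝ) Bwᵀ Dzwᵀ
               M Bw (-Pi) 0
               N Dzw 0 (-1))) *ᵥ z
        = star y ⬝ᵥ fromBlocks Pi (-Mᵀ) (-M) Pi *ᵥ y := by
      rw [← Sum.elim_comp_inl_inr y]
      simp only [hz, blk4, blk3, star_trivial, neg_mulVec, fromBlocks_mulVec,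
        fromRows_mulVec, fromCols_mulVec_sumElim, sumElim_dotProduct_sumElim,
        mulVec_zero, dotProduct_zero, zero_dotProduct, add_zero, zero_add,
        dotProduct_neg, neg_mulVec, dotProduct_add, Pi.neg_apply, Sum.elim_inl, Sum.elim_inr,
        neg_dotProduct, neg_neg, neg_add_rev, zero_mulVec, Sum.elim_comp_inl, Sum.elim_comp_inr, ← hx1, ← hx3]
      abel
    rw [key] at hpos
    exact hpos

lemma re_posdef_map {n : Type*} [Fintype n] {Q : Matrix n n ℝ} (hQ : Q.PosDef)
    {v : n → ℂ} (hv : v ≠ 0) :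
    0 < (star v ⬝ᵥ (Q.map (algebraMap ℝ ℂ)) *ᵥ v).re := by
  set a : n → ℝ := fun i => (v i).re with ha
  set b : n → ℝ := fun i => (v i).im with hb
  have key : (star v ⬝ᵥ (Q.map (algebraMap ℝ ℂ)) *ᵥ v).re
      = a ⬝ᵥ Q *ᵥ a + b ⬝ᵥ Q *ᵥ b := by
    simp only [dotProduct, mulVec, Pi.star_apply, map_apply, Finset.mul_sum,
      Complex.re_sum, ← Finset.sum_add_distrib]
    refine Finset.sum_congr rfl fun i _ => ?_
    refine Finset.sum_congr rfl fun j _ => ?_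
    simp [Complex.mul_re, Complex.mul_im, ha, hb, Complex.star_def]
  rw [key]
  have hab : a ≠ 0 ∨ b ≠ 0 := by
    by_contra hc
    push_neg at hc
    apply hv
    funext i
    have h1 := congrFun hc.1 i
    have h2 := congrFun hc.2 i
    simp only [ha, hb, Pi.zero_apply] at h1 h2
    exact Complex.ext h1 h2
  rcases hab with h' | h'
  · have := hQ.dotProduct_mulVec_pos h'
    have h2 := hQ.posSemidef.dotProduct_mulVec_nonneg b
    simp only [star_trivial] at this h2
    linarith
  · have := hQ.dotProduct_mulVec_pos h'
    have h2 := hQ.posSemidef.dotProduct_mulVec_nonneg a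
    simp only [star_trivial] at this h2
    linarith


lemma posDef_schur {n m : Type*} [Fintype n] [Fintype m] [DecidableEq n]
    {A : Matrix n n ℝ} (B : Matrix n m ℝ) (D : Matrix m m ℝ)
    (hA : A.PosDef) [Invertible A]
    (h : (fromBlocks A B Bᴴ D).PosDef) : (D - Bᴴ * A⁻¹ * B).PosDef := by
  refine Matrix.PosDef.of_dotProduct_mulVec_pos ?_ ?_
  · rw [← Matrix.IsHermitian.fromBlocks₁₁ B D hA.1]; exact h.1
  · intro x hx
    have hv : (Sum.elim (-((A⁻¹ * B) *ᵥ x)) x) ≠ 0 := by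
      intro hc
      apply hx
      funext i
      exact congrFun hc (Sum.inr i)
    have := h.dotProduct_mulVec_pos hv
    rw [dotProduct_mulVec, schur_complement_eq₁₁ B D _ _ hA.1, neg_add_cancel] at this
    simpa [dotProduct_mulVec] using this


/-- Feasibility of the state-feedback synthesis LMI implies that the state-feedback gain
`K = ΛΠ⁻¹` internally stabilizes the closed-loop system: all complex eigenvalues of
`A + B_u Λ Π⁻¹` lie in the open unit disc. Here `Pi` plays the role of `Π`. -/
theorem state_feedback_synthesis_stabilizes
    (n m p q : ℕ) (A : Matrix (Fin n) (Fin n) ℝ) (Bw : Matrix (Fin n) (Fin m) ℝ)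
    (Bu : Matrix (Fin n) (Fin q) ℝ) (Cz : Matrix (Fin p) (Fin n) ℝ)
    (Dzw : Matrix (Fin p) (Fin m) ℝ) (Dzu : Matrix (Fin p) (Fin q) ℝ) (η : ℝ)
    (Ψ : Matrix (Fin m) (Fin m) ℝ) (hΨs : Ψ.IsSymm) (hΨ : Ψ.PosDef)
    (Pi : Matrix (Fin n) (Fin n) ℝ) (hPis : Pi.IsSymm) (hPi : Pi.PosDef)
    (Λ : Matrix (Fin q) (Fin n) ℝ)
    (h : (blk4 (-Pi) 0 (A * Pi + Bu * Λ)ᵀ (Cz * Pi + Dzu * Λ)ᵀ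
               0 ((-η) • 1 : Matrix (Fin m) (Fin m) ℝ) Bwᵀ Dzwᵀ
               (A * Pi + Bu * Λ) Bw (-Pi) 0
               (Cz * Pi + Dzu * Λ) Dzw 0 (-1)).NegDef) :
    ∀ μ ∈ spectrum ℂ ((A + Bu * (Λ * Pi⁻¹)).map (algebraMap ℝ ℂ)), ‖μ‖ < 1 := by
  intro μ hμ
  have hdetPi : IsUnit Pi.det := isUnit_iff_ne_zero.mpr hPi.det_pos.ne'
  haveI : Invertible Pi := Pi.invertibleOfIsUnitDet hdetPi
  set M : Matrix (Fin n) (Fin n) ℝ := A * Pi + Bu * Λ with hMdef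
  set Acl : Matrix (Fin n) (Fin n) ℝ := A + Bu * (Λ * Pi⁻¹) with hAcl
  have hMeq : M = Acl * Pi := by
    rw [hAcl, hMdef, Matrix.add_mul, Matrix.mul_assoc, Matrix.mul_assoc,
      Matrix.nonsing_inv_mul Pi hdetPi, Matrix.mul_one]
  -- step 1: the 2×2 principal submatrix is PosDef
  have h2 : (fromBlocks Pi (-Mᵀ) (-M) Pi).PosDef := extract13 hPis h
  -- step 2: Schur complement
  have h2' : (fromBlocks Pi (-Mᵀ) (-Mᵀ)ᴴ Pi).PosDef := by
    have : (-Mᵀ)ᴴ = -M := by simp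
    rwa [this]
  have hS : (Pi - (-Mᵀ)ᴴ * Pi⁻¹ * (-Mᵀ)).PosDef := posDef_schur (-Mᵀ) Pi hPi h2'
  have hQ : (Pi - Acl * Pi * Aclᵀ).PosDef := by
    have e1 : (-Mᵀ)ᴴ * Pi⁻¹ * (-Mᵀ) = Acl * Pi * Aclᵀ := by
      have : (-Mᵀ)ᴴ = -M := by simp
      rw [this, hMeq, transpose_mul, hPis.eq, Matrix.neg_mul, Matrix.mul_neg,
        Matrix.neg_mul, neg_neg, Pi.mul_nonsing_inv_cancel_right Acl hdetPi,
        Matrix.mul_assoc]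
    rwa [e1] at hS
  -- step 3: eigenvector of the transpose
  set c := algebraMap ℝ ℂ
  set Ac := Acl.map c with hAc
  have hdet : (μ • (1 : Matrix (Fin n) (Fin n) ℂ) - Ac).det = 0 := by
    rw [spectrum.mem_iff, Algebra.algebraMap_eq_smul_one] at hμ
    by_contra hc
    exact hμ ((Matrix.isUnit_iff_isUnit_det _).mpr (isUnit_iff_ne_zero.mpr hc))
  have hdetT : (μ • (1 : Matrix (Fin n) (Fin n) ℂ) - Acᵀ).det = 0 := by
    rw [← Matrix.det_transpose] at hdet
    rwa [transpose_sub, transpose_smul, transpose_one] at hdet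
  obtain ⟨v, hv0, hv⟩ := (Matrix.exists_mulVec_eq_zero_iff).mpr hdetT
  have heig : Acᵀ *ᵥ v = μ • v := by
    rw [sub_mulVec, smul_mulVec, one_mulVec, sub_eq_zero] at hv
    exact hv.symm
  -- conjugate transpose facts
  have hAcH : Acᴴ = Aclᵀ.map c := by
    ext i j
    simp [hAc, conjTranspose_apply, c, Complex.coe_algebraMap, Complex.conj_ofReal]
  have hAcT : Acᵀ = Aclᵀ.map c := by
    ext i j
    simp [hAc]
  have hvecmul : star v ᵥ* Ac = star (μ • v) := by
    have : star (Acᴴ *ᵥ v) = star v ᵥ* Ac := by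
      rw [star_mulVec, conjTranspose_conjTranspose]
    rw [← this, hAcH, ← hAcT, heig]
  -- quadratic forms
  set t : ℂ := star v ⬝ᵥ (Pi.map c) *ᵥ v with ht
  have hmain : star v ⬝ᵥ ((Pi - Acl * Pi * Aclᵀ).map c) *ᵥ v
      = t - (star μ * μ) * t := by
    have hmap : (Pi - Acl * Pi * Aclᵀ).map c = Pi.map c - Ac * Pi.map c * Aclᵀ.map c := by
      rw [Matrix.map_sub _ (map_sub c), Matrix.map_mul, Matrix.map_mul]
    rw [hmap, sub_mulVec, dotProduct_sub, ← ht]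
    congr 1
    rw [Matrix.mul_assoc, ← mulVec_mulVec, ← hAcT, ← mulVec_mulVec, heig,
      mulVec_smul, dotProduct_mulVec, hvecmul]
    simp only [star_smul, smul_dotProduct, dotProduct_smul, smul_eq_mul, ← ht]
    ring
  have hQpos := re_posdef_map hQ hv0
  have hPipos := re_posdef_map hPi hv0
  rw [hmain] at hQpos
  rw [← ht] at hPipos
  have hsm : star μ * μ = (Complex.normSq μ : ℂ) := by
    rw [Complex.star_def, ← Complex.normSq_eq_conj_mul_self]
  rw [hsm] at hQpos
  have hre : (t - (Complex.normSq μ : ℂ) * t).re = (1 - Complex.normSq μ) * t.re := by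
    simp [Complex.sub_re, Complex.mul_re]
    ring
  rw [hre] at hQpos
  have hnormSq : Complex.normSq μ < 1 := by
    nlinarith [hQpos, hPipos]
  have := Complex.sq_norm μ
  nlinarith [norm_nonneg μ, this, hnormSq]
end

section
/- Let Φ be a real symmetric positive definite n×n matrix, S an invertible real n×n matrix, Ψ a real symmetric m×m matrix, η a real number, 𝒜 a real n×n matrix, ℬ a real n×m matrix, 𝒞 a real p×n matrix, and 𝒟 a real p×m matrix. Then: (i) if the symmetric block matrix with block rows [Ψ − η·I_m, ℬᵀSᵀ, 𝒟ᵀ], [Sℬ, Φ − S − Sᵀ, 0], [𝒟, 0, −I_p] is negative definite, then the symmetric block matrix with block rows [Ψ − η·I_m, ℬᵀ, 𝒟ᵀ], [ℬ, −Φ⁻¹, 0], [𝒟, 0, −I_p] is negative definite; (ii) if the symmetric block matrix with block rows [−Φ, 0, 𝒜ᵀSᵀ, 𝒞ᵀ], [0, −η·I_m, ℬᵀSᵀ, 𝒟ᵀ], [S𝒜, Sℬ, Φ − S − Sᵀ, 0], [𝒞, 𝒟, 0, −I_p] is negative definite, then the symmetric block matrix with block rows [−Φ, 0, 𝒜ᵀ,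 𝒞ᵀ], [0, −η·I_m, ℬᵀ, 𝒟ᵀ], [𝒜, ℬ, −Φ⁻¹, 0], [𝒞, 𝒟, 0, −I_p] is negative definite. -/
open Matrix

lemma posDef_conj {N : Type*} [Fintype N] [DecidableEq N] {M T : Matrix N N ℝ}
    (hM : M.PosDef) (hT : IsUnit T) : (Tᵀ * M * T).PosDef := by
  have hTT : Tᵀ = Tᴴ := (conjTranspose_eq_transpose_of_trivial T).symm
  rw [hTT]
  exact hM.conjTranspose_mul_mul_same (Matrix.mulVec_injective_iff_isUnit.2 hT)

/-- Replacing the slack-variable LMIs (with slack matrix `S` applied on the left) by the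
corresponding LMIs with `−Φ⁻¹`. -/
theorem slack_lmi_implications
    (n m p : ℕ) (Φ : Matrix (Fin n) (Fin n) ℝ) (hΦs : Φ.IsSymm) (hΦ : Φ.PosDef)
    (S : Matrix (Fin n) (Fin n) ℝ) (hS : IsUnit S)
    (Ψ : Matrix (Fin m) (Fin m) ℝ) (hΨs : Ψ.IsSymm) (η : ℝ)
    (𝒜 : Matrix (Fin n) (Fin n) ℝ) (ℬ : Matrix (Fin n) (Fin m) ℝ)
    (𝒞 : Matrix (Fin p) (Fin n) ℝ) (𝒟 : Matrix (Fin p) (Fin m) ℝ) :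
    ((blk3 (Ψ - η • 1) (ℬᵀ * Sᵀ) 𝒟ᵀ
           (S * ℬ) (Φ - S - Sᵀ) 0
           𝒟 0 (-1)).NegDef →
      (blk3 (Ψ - η • 1) ℬᵀ 𝒟ᵀ
            ℬ (-Φ⁻¹) 0
            𝒟 0 (-1)).NegDef) ∧
    ((blk4 (-Φ) 0 (𝒜ᵀ * Sᵀ) 𝒞ᵀ
           0 ((-η) • 1 : Matrix (Fin m) (Fin m) ℝ) (ℬᵀ * Sᵀ) 𝒟ᵀ
           (S * 𝒜) (S * ℬ) (Φ - S - Sᵀ) 0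
           𝒞 𝒟 0 (-1)).NegDef →
      (blk4 (-Φ) 0 𝒜ᵀ 𝒞ᵀ
            0 ((-η) • 1 : Matrix (Fin m) (Fin m) ℝ) ℬᵀ 𝒟ᵀ
            𝒜 ℬ (-Φ⁻¹) 0
            𝒞 𝒟 0 (-1)).NegDef) := by
  have hSd : IsUnit S.det := (Matrix.isUnit_iff_isUnit_det S).1 hS
  have hΦd : IsUnit Φ.det := isUnit_iff_ne_zero.2 hΦ.det_pos.ne'
  have hΦt : Φᵀ = Φ := hΦs
  have h2 : S⁻¹ * S = 1 := nonsing_inv_mul S hSd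
  have h1 : Sᵀ * (S⁻¹)ᵀ = 1 := by rw [← transpose_mul, h2, transpose_one]
  have h3 : Φ * Φ⁻¹ = 1 := mul_nonsing_inv Φ hΦd
  have h4 : Φ⁻¹ * Φ = 1 := nonsing_inv_mul Φ hΦd
  have c1 : ∀ {q : ℕ} (X : Matrix (Fin n) (Fin q) ℝ), S⁻¹ * (S * X) = X := fun X => by
    rw [← Matrix.mul_assoc, h2, Matrix.one_mul]
  have c2 : ∀ {q : ℕ} (X : Matrix (Fin n) (Fin q) ℝ), Sᵀ * ((S⁻¹)ᵀ * X) = X := fun X => by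
    rw [← Matrix.mul_assoc, h1, Matrix.one_mul]
  have c3 : ∀ {q : ℕ} (X : Matrix (Fin n) (Fin q) ℝ), Φ * (Φ⁻¹ * X) = X := fun X => by
    rw [← Matrix.mul_assoc, h3, Matrix.one_mul]
  have c4 : ∀ {q : ℕ} (X : Matrix (Fin n) (Fin q) ℝ), Φ⁻¹ * (Φ * X) = X := fun X => by
    rw [← Matrix.mul_assoc, h4, Matrix.one_mul]
  set K : Matrix (Fin n) (Fin n) ℝ := 1 - S⁻¹ * Φ with hK
  have h22 : Φ⁻¹ = S⁻¹ * -(Φ - S - Sᵀ) * (S⁻¹)ᵀ + K * Φ⁻¹ * Kᵀ := by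
    rw [hK]
    simp only [sub_sub, transpose_sub, transpose_one, transpose_mul, hΦt,
      transpose_transpose, Matrix.mul_sub, Matrix.sub_mul, Matrix.mul_add,
      Matrix.add_mul, Matrix.mul_one, Matrix.one_mul, neg_sub,
      Matrix.mul_neg, Matrix.neg_mul, Matrix.mul_assoc, c1, c2, c3, c4, h1, h2, h3, h4]
    abel
  constructor
  · intro H
    show (-(blk3 (Ψ - η • 1) ℬᵀ 𝒟ᵀ ℬ (-Φ⁻¹) 0 𝒟 0 (-1 : Matrix (Fin p) (Fin p) ℝ))).PosDef
    have H' : (-(blk3 (Ψ - η • 1) (ℬᵀ * Sᵀ) 𝒟ᵀ (S * ℬ) (Φ - S - Sᵀ) 0 𝒟 0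
        (-1 : Matrix (Fin p) (Fin p) ℝ))).PosDef := H
    set T : Matrix (Fin m ⊕ (Fin n ⊕ Fin p)) (Fin m ⊕ (Fin n ⊕ Fin p)) ℝ :=
      blk3 1 0 0 0 (S⁻¹)ᵀ 0 0 0 1 with hT
    have hTu : IsUnit T := by
      rw [Matrix.isUnit_iff_isUnit_det, hT]
      simp only [blk3, fromCols_zero, fromRows_zero, det_fromBlocks_zero₂₁,
        det_one, one_mul, mul_one, det_transpose]
      exact isUnit_nonsing_inv_det S hSd
    set V : Matrix (Fin m ⊕ (Fin n ⊕ Fin p)) (Fin n) ℝ := fromRows 0 (fromRows K 0) with hV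
    have hC : (blk3 (0 : Matrix (Fin m) (Fin m) ℝ) 0 0 0 (K * Φ⁻¹ * Kᵀ) 0 0 0
        (0 : Matrix (Fin p) (Fin p) ℝ)).PosSemidef := by
      have hps := (hΦ.inv.posSemidef).mul_mul_conjTranspose_same V
      rw [conjTranspose_eq_transpose_of_trivial] at hps
      refine cast (congrArg Matrix.PosSemidef ?_) hps
      ext i j
      obtain (i|i|i) := i <;> obtain (j|j|j) := j <;>
        simp [blk3, hV, fromBlocks, fromRows_apply_inl, fromRows_apply_inr, fromCols, Matrix.mul_apply,
          Fintype.sum_sum_type]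
    have key : -(blk3 (Ψ - η • 1) ℬᵀ 𝒟ᵀ ℬ (-Φ⁻¹) 0 𝒟 0 (-1 : Matrix (Fin p) (Fin p) ℝ)) =
        Tᵀ * (-(blk3 (Ψ - η • 1) (ℬᵀ * Sᵀ) 𝒟ᵀ (S * ℬ) (Φ - S - Sᵀ) 0 𝒟 0 (-1))) * T +
        blk3 0 0 0 0 (K * Φ⁻¹ * Kᵀ) 0 0 0 0 := by
      simp only [hT, blk3, fromBlocks_transpose, transpose_fromCols, transpose_fromRows,
        transpose_zero, transpose_one, transpose_transpose, fromBlocks_neg, fromRows_neg,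
        fromCols_neg, fromBlocks_multiply, fromCols_mul_fromBlocks,
        fromBlocks_mul_fromRows, fromCols_mul_fromRows, fromRows_mul_fromCols,
        fromRows_mul, mul_fromCols, Matrix.mul_zero, Matrix.zero_mul, add_zero, zero_add,
        Matrix.mul_one, Matrix.one_mul, fromCols_zero, fromRows_zero, fromBlocks_add,
        neg_neg, neg_zero]
      rw [fromBlocks_inj]
      refine ⟨rfl, ?_, ?_, ?_⟩
      · rw [fromCols_ext_iff]
        exact ⟨by rw [Matrix.neg_mul, Matrix.mul_assoc, h1, Matrix.mul_one], rfl⟩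
      · rw [fromRows_ext_iff]
        exact ⟨by rw [Matrix.mul_neg, c1], rfl⟩
      · rw [fromBlocks_inj]
        exact ⟨h22, rfl, rfl, rfl⟩
    rw [key]
    exact (posDef_conj H' hTu).add_posSemidef hC
  · intro H
    show (-(blk4 (-Φ) 0 𝒜ᵀ 𝒞ᵀ 0 ((-η) • 1 : Matrix (Fin m) (Fin m) ℝ) ℬᵀ 𝒟ᵀ
        𝒜 ℬ (-Φ⁻¹) 0 𝒞 𝒟 0 (-1 : Matrix (Fin p) (Fin p) ℝ))).PosDef
    have H' : (-(blk4 (-Φ) 0 (𝒜ᵀ * Sᵀ) 𝒞ᵀ 0 ((-η) • 1 : Matrix (Fin m) (Fin m) ℝ)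
        (ℬᵀ * Sᵀ) 𝒟ᵀ (S * 𝒜) (S * ℬ) (Φ - S - Sᵀ) 0 𝒞 𝒟 0
        (-1 : Matrix (Fin p) (Fin p) ℝ))).PosDef := H
    set T : Matrix (Fin n ⊕ (Fin m ⊕ (Fin n ⊕ Fin p))) (Fin n ⊕ (Fin m ⊕ (Fin n ⊕ Fin p))) ℝ :=
      blk4 1 0 0 0 0 1 0 0 0 0 (S⁻¹)ᵀ 0 0 0 0 1 with hT
    have hTu : IsUnit T := by
      rw [Matrix.isUnit_iff_isUnit_det, hT]
      simp only [blk4, blk3, fromCols_zero, fromRows_zero, det_fromBlocks_zero₂₁,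
        det_one, one_mul, mul_one, det_transpose]
      exact isUnit_nonsing_inv_det S hSd
    set V : Matrix (Fin n ⊕ (Fin m ⊕ (Fin n ⊕ Fin p))) (Fin n) ℝ :=
      fromRows 0 (fromRows 0 (fromRows K 0)) with hV
    have hC : (blk4 (0 : Matrix (Fin n) (Fin n) ℝ) 0 0 0 0 (0 : Matrix (Fin m) (Fin m) ℝ) 0 0
        0 0 (K * Φ⁻¹ * Kᵀ) 0 0 0 0 (0 : Matrix (Fin p) (Fin p) ℝ)).PosSemidef := by
      have hps := (hΦ.inv.posSemidef).mul_mul_conjTranspose_same V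
      rw [conjTranspose_eq_transpose_of_trivial] at hps
      refine cast (congrArg Matrix.PosSemidef ?_) hps
      ext i j
      obtain (i|i|i|i) := i <;> obtain (j|j|j|j) := j <;>
        simp [blk4, blk3, hV, fromBlocks, fromRows_apply_inl, fromRows_apply_inr, fromCols, Matrix.mul_apply,
          Fintype.sum_sum_type]
    have key : -(blk4 (-Φ) 0 𝒜ᵀ 𝒞ᵀ 0 ((-η) • 1 : Matrix (Fin m) (Fin m) ℝ) ℬᵀ 𝒟ᵀ
          𝒜 ℬ (-Φ⁻¹) 0 𝒞 𝒟 0 (-1 : Matrix (Fin p) (Fin p) ℝ)) =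
        Tᵀ * (-(blk4 (-Φ) 0 (𝒜ᵀ * Sᵀ) 𝒞ᵀ 0 ((-η) • 1 : Matrix (Fin m) (Fin m) ℝ)
          (ℬᵀ * Sᵀ) 𝒟ᵀ (S * 𝒜) (S * ℬ) (Φ - S - Sᵀ) 0 𝒞 𝒟 0 (-1))) * T +
        blk4 0 0 0 0 0 0 0 0 0 0 (K * Φ⁻¹ * Kᵀ) 0 0 0 0 0 := by
      simp only [hT, blk4, blk3, fromBlocks_transpose, transpose_fromCols,
        transpose_fromRows, transpose_zero, transpose_one, transpose_transpose,
        fromBlocks_neg, fromRows_neg, fromCols_neg, fromBlocks_multiply,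
        fromCols_mul_fromBlocks, fromBlocks_mul_fromRows, fromCols_mul_fromRows,
        fromRows_mul_fromCols, fromRows_mul, mul_fromCols, Matrix.mul_zero,
        Matrix.zero_mul, add_zero, zero_add, Matrix.mul_one, Matrix.one_mul,
        fromCols_zero, fromRows_zero, fromBlocks_add, neg_neg, neg_zero]
      rw [fromBlocks_inj]
      refine ⟨rfl, ?_, ?_, ?_⟩
      · rw [fromCols_ext_iff]
        refine ⟨rfl, ?_⟩
        rw [fromCols_ext_iff]
        exact ⟨by rw [Matrix.neg_mul, Matrix.mul_assoc, h1, Matrix.mul_one], rfl⟩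
      · rw [fromRows_ext_iff]
        refine ⟨rfl, ?_⟩
        rw [fromRows_ext_iff]
        exact ⟨by rw [Matrix.mul_neg, c1], rfl⟩
      · rw [fromBlocks_inj]
        refine ⟨rfl, ?_, ?_, ?_⟩
        · rw [fromCols_ext_iff]
          exact ⟨by rw [Matrix.neg_mul, Matrix.mul_assoc, h1, Matrix.mul_one], rfl⟩
        · rw [fromRows_ext_iff]
          exact ⟨by rw [Matrix.mul_neg, c1], rfl⟩
        · rw [fromBlocks_inj]
          exact ⟨h22, rfl, rfl, rfl⟩
    rw [key]
    exact (posDef_conj H' hTu).add_posSemidef hC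
end

section
/- Let Π be a real symmetric positive definite n×n matrix, R an invertible real n×n matrix, η a real number, 𝒜 a real n×n matrix, ℬ a real n×m matrix, 𝒞 a real p×n matrix, and 𝒟 a real p×m matrix. If the symmetric block matrix with block rows [Π − R − Rᵀ, 0, Rᵀ𝒜ᵀ, Rᵀ𝒞ᵀ], [0, −η·I_m, ℬᵀ, 𝒟ᵀ], [𝒜R, ℬ, −Π, 0], [𝒞R, 𝒟, 0, −I_p] is negative definite, then the symmetric block matrix with block rows [−Π⁻¹, 0, 𝒜ᵀ, 𝒞ᵀ], [0, −η·I_m, ℬᵀ, 𝒟ᵀ], [𝒜, ℬ, −Π, 0], [𝒞, 𝒟, 0, −I_p] is negative definite. -/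
open Matrix

lemma posDef_conj_t {k : Type*} [Fintype k] [DecidableEq k] {A S : Matrix k k ℝ}
    (hA : A.PosDef) (hS : IsUnit S) : (Sᵀ * A * S).PosDef := by
  have h2 := hA.conjTranspose_mul_mul_same (B := S) (Matrix.mulVec_injective_of_isUnit hS)
  simpa only [Matrix.conjTranspose_eq_transpose_of_trivial] using h2

/-- Replacing the slack-variable LMI (with slack matrix `R` applied on the right) by the
corresponding LMI with `−Π⁻¹`. Here `Pi` plays the role of `Π`. -/
theorem slack_lmi_right_implication
    (n m p : ℕ) (Pi : Matrix (Fin n) (Fin n) ℝ) (hPis : Pi.IsSymm) (hPi : Pi.PosDef)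
    (R : Matrix (Fin n) (Fin n) ℝ) (hR : IsUnit R) (η : ℝ)
    (𝒜 : Matrix (Fin n) (Fin n) ℝ) (ℬ : Matrix (Fin n) (Fin m) ℝ)
    (𝒞 : Matrix (Fin p) (Fin n) ℝ) (𝒟 : Matrix (Fin p) (Fin m) ℝ)
    (h : (blk4 (Pi - R - Rᵀ) 0 (Rᵀ * 𝒜ᵀ) (Rᵀ * 𝒞ᵀ)
               0 ((-η) • 1 : Matrix (Fin m) (Fin m) ℝ) ℬᵀ 𝒟ᵀ
               (𝒜 * R) ℬ (-Pi) 0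
               (𝒞 * R) 𝒟 0 (-1)).NegDef) :
    (blk4 (-Pi⁻¹) 0 𝒜ᵀ 𝒞ᵀ
          0 ((-η) • 1 : Matrix (Fin m) (Fin m) ℝ) ℬᵀ 𝒟ᵀ
          𝒜 ℬ (-Pi) 0
          𝒞 𝒟 0 (-1)).NegDef := by
  classical
  have hRd : IsUnit R.det := (Matrix.isUnit_iff_isUnit_det R).mp hR
  haveI : Invertible R := R.invertibleOfIsUnitDet hRd
  haveI : Invertible Pi := hPi.isUnit.invertible
  have hPiiT : (Pi⁻¹)ᵀ = Pi⁻¹ := by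
    rw [Matrix.transpose_nonsing_inv, hPis.eq]
  have hRT : R⁻¹ᵀ * Rᵀ = 1 := by
    rw [← Matrix.transpose_mul, Matrix.mul_nonsing_inv R hRd, Matrix.transpose_one]
  have hRT2 : ∀ X : Matrix (Fin n) (Fin n) ℝ, R⁻¹ᵀ * (Rᵀ * X) = X := fun X => by
    rw [← Matrix.mul_assoc, hRT, Matrix.one_mul]
  set K : Matrix (Fin n) (Fin n) ℝ := R⁻¹ - Pi⁻¹ with hK
  set TT := (Fin m ⊕ (Fin n ⊕ Fin p)) with hTT
  set B2 : Matrix (Fin n) TT ℝ := fromCols 0 (fromCols 𝒜ᵀ 𝒞ᵀ) with hB2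
  set C2 : Matrix TT (Fin n) ℝ := fromRows 0 (fromRows 𝒜 𝒞) with hC2
  set D0 : Matrix TT TT ℝ :=
    blk3 ((-η) • 1 : Matrix (Fin m) (Fin m) ℝ) ℬᵀ 𝒟ᵀ ℬ (-Pi) 0 𝒟 0 (-1) with hD0
  have hcol : Rᵀ * B2 = fromCols 0 (fromCols (Rᵀ * 𝒜ᵀ) (Rᵀ * 𝒞ᵀ)) := by
    rw [hB2, Matrix.mul_fromCols, Matrix.mul_fromCols, Matrix.mul_zero]
  have hrow : C2 * R = fromRows 0 (fromRows (𝒜 * R) (𝒞 * R)) := by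
    rw [hC2, Matrix.fromRows_mul, Matrix.fromRows_mul, Matrix.zero_mul]
  have hM1 : blk4 (Pi - R - Rᵀ) 0 (Rᵀ * 𝒜ᵀ) (Rᵀ * 𝒞ᵀ)
               0 ((-η) • 1 : Matrix (Fin m) (Fin m) ℝ) ℬᵀ 𝒟ᵀ
               (𝒜 * R) ℬ (-Pi) 0
               (𝒞 * R) 𝒟 0 (-1)
      = fromBlocks (Pi - R - Rᵀ) (Rᵀ * B2) (C2 * R) D0 := by
    rw [blk4, hcol, hrow]
  have hM2 : blk4 (-Pi⁻¹) 0 𝒜ᵀ 𝒞ᵀ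
          0 ((-η) • 1 : Matrix (Fin m) (Fin m) ℝ) ℬᵀ 𝒟ᵀ
          𝒜 ℬ (-Pi) 0
          𝒞 𝒟 0 (-1)
      = fromBlocks (-Pi⁻¹) B2 C2 D0 := rfl
  set S : Matrix (Fin n ⊕ TT) (Fin n ⊕ TT) ℝ := fromBlocks R⁻¹ 0 0 1 with hSdef
  have hS : IsUnit S := by
    rw [Matrix.isUnit_iff_isUnit_det, hSdef, Matrix.det_fromBlocks_zero₂₁, Matrix.det_one,
      mul_one, Matrix.det_nonsing_inv, isUnit_ringInverse]
    exact hRd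
  have hE : (fromBlocks (Kᵀ * Pi * K) 0 0 (0 : Matrix TT TT ℝ)).PosSemidef := by
    have h0 := hPi.posSemidef.conjTranspose_mul_mul_same
      (fromCols K (0 : Matrix (Fin n) TT ℝ))
    have heq : (fromCols K (0 : Matrix (Fin n) TT ℝ))ᴴ * Pi
          * fromCols K (0 : Matrix (Fin n) TT ℝ)
        = fromBlocks (Kᵀ * Pi * K) 0 0 (0 : Matrix TT TT ℝ) := by
      rw [Matrix.conjTranspose_eq_transpose_of_trivial, Matrix.transpose_fromCols,
        Matrix.transpose_zero, Matrix.fromRows_mul, Matrix.fromRows_mul_fromCols,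
        Matrix.zero_mul, Matrix.mul_zero, Matrix.zero_mul, Matrix.mul_zero]
    rwa [heq] at h0
  have e11 : R⁻¹ᵀ * -(Pi - R - Rᵀ) * R⁻¹ + Kᵀ * Pi * K = Pi⁻¹ := by
    rw [hK]
    simp only [Matrix.transpose_sub, hPiiT, Matrix.neg_mul, Matrix.mul_neg,
      Matrix.sub_mul, Matrix.mul_sub, Matrix.mul_assoc, Matrix.mul_inv_of_invertible,
      Matrix.inv_mul_cancel_left_of_invertible, hRT2, Matrix.mul_one]
    abel
  have key : -(fromBlocks (-Pi⁻¹) B2 C2 D0)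
      = Sᵀ * -(fromBlocks (Pi - R - Rᵀ) (Rᵀ * B2) (C2 * R) D0) * S
        + fromBlocks (Kᵀ * Pi * K) 0 0 (0 : Matrix TT TT ℝ) := by
    rw [hSdef, Matrix.fromBlocks_transpose, Matrix.transpose_zero, Matrix.transpose_zero,
      Matrix.transpose_one, Matrix.fromBlocks_neg, Matrix.fromBlocks_neg,
      Matrix.fromBlocks_multiply, Matrix.fromBlocks_multiply, Matrix.fromBlocks_add,
      Matrix.fromBlocks_inj]
    refine ⟨?_, ?_, ?_, ?_⟩
    · simp only [Matrix.zero_mul, Matrix.mul_zero, add_zero, zero_add, neg_neg]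
      rw [← e11]
    · simp only [Matrix.zero_mul, Matrix.mul_zero, add_zero, zero_add, Matrix.one_mul,
        Matrix.mul_one]
      rw [Matrix.mul_neg, ← Matrix.mul_assoc, hRT, Matrix.one_mul]
    · simp only [Matrix.zero_mul, Matrix.mul_zero, add_zero, zero_add, Matrix.one_mul,
        Matrix.mul_one]
      rw [Matrix.neg_mul, Matrix.mul_assoc, Matrix.mul_inv_of_invertible, Matrix.mul_one]
    · simp only [Matrix.zero_mul, Matrix.mul_zero, add_zero, zero_add, Matrix.one_mul,
        Matrix.mul_one]
  rw [hM1] at h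
  show (-(blk4 _ _ _ _ _ _ _ _ _ _ _ _ _ _ _ _)).PosDef
  rw [hM2, key]
  exact (posDef_conj_t h hS).add_posSemidef hE
end

section
/- Let A (n×n), B_w (n×m), B_u (n×q), C_z (p×n), D_zw (p×m), D_zu (p×q), C_y (r×n) be real matrices of a plant with D_yw = 0, and let T_y be an invertible real n×n matrix with C_y T_y⁻¹ = [I_r, 0]. Set Ā := T_y A T_y⁻¹, B̄_w := T_y B_w, B̄_u := T_y B_u, C̄_z := C_z T_y⁻¹. Let η be a real number, Ψ a real symmetric positive definite m×m matrix, Π̄ a real symmetric positive definite n×n matrix, R̄ the block-diagonal real n×n matrix with diagonal blocks R̄₁ (r×r, invertible) and R̄₂ ((n−r)×(n−r), invertible), and M := [M₁, 0] a real q×n matrix with left block M₁ (q×r). Suppose the symmetric block matrix with block rows [Ψ − η·I_m, B̄_wᵀ, D_zwᵀ], [B̄_w, −Π̄, 0], [D_zw, 0, −I_p] is negative definite, and the symmetric block matrix with block rows [Π̄ − R̄ − R̄ᵀ, 0, (ĀR̄ + B̄_uM)ᵀ, (C̄_zR̄ + D_zuM)ᵀ], [0, −η·I_m, B̄_wᵀ,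 D_zwᵀ], [ĀR̄ + B̄_uM, B̄_w, −Π̄, 0], [C̄_zR̄ + D_zuM, D_zw, 0, −I_p] is negative definite. Then, with K := M₁R̄₁⁻¹, Π := T_y⁻¹ Π̄ T_y^{−ᵀ}, Φ := Π⁻¹, 𝒜 := A + B_uKC_y, ℬ := B_w, 𝒞 := C_z + D_zuKC_y, 𝒟 := D_zw, the matrix Φ is symmetric positive definite, the symmetric block matrix with block rows [Ψ − η·I_m, ℬᵀ, 𝒟ᵀ], [ℬ, −Φ⁻¹, 0], [𝒟, 0, −I_p] is negative definite, and the symmetric block matrix with block rows [−Φ, 0, 𝒜ᵀ, 𝒞ᵀ], [0, −η·I_m, ℬᵀ, 𝒟ᵀ], [𝒜, ℬ, −Φ⁻¹, 0], [𝒞, 𝒟, 0, −I_p] is negative definite. -/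
open Matrix

namespace SOFAux

open Matrix

variable {i1 i2 i3 i4 : Type*} [Fintype i1] [Fintype i2] [Fintype i3] [Fintype i4]

theorem posDef_congr [DecidableEq i1] {A : Matrix i1 i1 ℝ}
    (hA : A.PosDef) {B : Matrix i1 i1 ℝ} (hB : IsUnit B) : (Bᵀ * A * B).PosDef := by
  refine Matrix.PosDef.of_dotProduct_mulVec_pos ?_ (fun x hx => ?_)
  · have h := Matrix.isHermitian_conjTranspose_mul_mul B hA.1
    rwa [conjTranspose_eq_transpose_of_trivial] at h
  · have hBi := Matrix.mulVec_injective_iff_isUnit.mpr hB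
    have hx' : B *ᵥ x ≠ 0 := fun h => hx (hBi (by simpa using h))
    have h2 := hA.dotProduct_mulVec_pos hx'
    simp only [star_trivial] at h2 ⊢
    rw [Matrix.mul_assoc, ← Matrix.mulVec_mulVec, dotProduct_mulVec, vecMul_transpose,
      ← Matrix.mulVec_mulVec]
    exact h2

theorem negDef_congr [DecidableEq i1] {A : Matrix i1 i1 ℝ}
    (hA : A.NegDef) {B : Matrix i1 i1 ℝ} (hB : IsUnit B) : (Bᵀ * A * B).NegDef := by
  have h := posDef_congr hA hB
  unfold Matrix.NegDef at *
  have : Bᵀ * -A * B = -(Bᵀ * A * B) := by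
    simp [Matrix.mul_neg, Matrix.neg_mul]
  rwa [this] at h

def dg3 (D1 : Matrix i1 i1 ℝ) (D2 : Matrix i2 i2 ℝ) (D3 : Matrix i3 i3 ℝ) :
    Matrix (i1 ⊕ (i2 ⊕ i3)) (i1 ⊕ (i2 ⊕ i3)) ℝ :=
  fromBlocks D1 0 0 (fromBlocks D2 0 0 D3)

def dg4 (D1 : Matrix i1 i1 ℝ) (D2 : Matrix i2 i2 ℝ) (D3 : Matrix i3 i3 ℝ)
    (D4 : Matrix i4 i4 ℝ) :
    Matrix (i1 ⊕ (i2 ⊕ (i3 ⊕ i4))) (i1 ⊕ (i2 ⊕ (i3 ⊕ i4))) ℝ :=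
  fromBlocks D1 0 0 (fromBlocks D2 0 0 (fromBlocks D3 0 0 D4))

theorem dg3_congr (D1 : Matrix i1 i1 ℝ) (D2 : Matrix i2 i2 ℝ) (D3 : Matrix i3 i3 ℝ)
    (X11 : Matrix i1 i1 ℝ) (X12 : Matrix i1 i2 ℝ) (X13 : Matrix i1 i3 ℝ)
    (X21 : Matrix i2 i1 ℝ) (X22 : Matrix i2 i2 ℝ) (X23 : Matrix i2 i3 ℝ)
    (X31 : Matrix i3 i1 ℝ) (X32 : Matrix i3 i2 ℝ) (X33 : Matrix i3 i3 ℝ) :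
    (dg3 D1 D2 D3)ᵀ * blk3 X11 X12 X13 X21 X22 X23 X31 X32 X33 * dg3 D1 D2 D3 =
    blk3 (D1ᵀ * X11 * D1) (D1ᵀ * X12 * D2) (D1ᵀ * X13 * D3)
         (D2ᵀ * X21 * D1) (D2ᵀ * X22 * D2) (D2ᵀ * X23 * D3)
         (D3ᵀ * X31 * D1) (D3ᵀ * X32 * D2) (D3ᵀ * X33 * D3) := by
  simp [dg3, blk3, fromBlocks_transpose, fromBlocks_multiply, mul_fromCols, fromRows_mul,
    fromCols_mul_fromBlocks, fromBlocks_mul_fromRows, fromCols_mul_fromRows,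
    fromRows_mul_fromCols, transpose_fromCols, transpose_fromRows, Matrix.mul_assoc]

theorem dg4_congr (D1 : Matrix i1 i1 ℝ) (D2 : Matrix i2 i2 ℝ) (D3 : Matrix i3 i3 ℝ)
    (D4 : Matrix i4 i4 ℝ)
    (X11 : Matrix i1 i1 ℝ) (X12 : Matrix i1 i2 ℝ) (X13 : Matrix i1 i3 ℝ) (X14 : Matrix i1 i4 ℝ)
    (X21 : Matrix i2 i1 ℝ) (X22 : Matrix i2 i2 ℝ) (X23 : Matrix i2 i3 ℝ) (X24 : Matrix i2 i4 ℝ)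
    (X31 : Matrix i3 i1 ℝ) (X32 : Matrix i3 i2 ℝ) (X33 : Matrix i3 i3 ℝ) (X34 : Matrix i3 i4 ℝ)
    (X41 : Matrix i4 i1 ℝ) (X42 : Matrix i4 i2 ℝ) (X43 : Matrix i4 i3 ℝ) (X44 : Matrix i4 i4 ℝ) :
    (dg4 D1 D2 D3 D4)ᵀ * blk4 X11 X12 X13 X14 X21 X22 X23 X24 X31 X32 X33 X34 X41 X42 X43 X44
      * dg4 D1 D2 D3 D4 =
    blk4 (D1ᵀ * X11 * D1) (D1ᵀ * X12 * D2) (D1ᵀ * X13 * D3) (D1ᵀ * X14 * D4)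
         (D2ᵀ * X21 * D1) (D2ᵀ * X22 * D2) (D2ᵀ * X23 * D3) (D2ᵀ * X24 * D4)
         (D3ᵀ * X31 * D1) (D3ᵀ * X32 * D2) (D3ᵀ * X33 * D3) (D3ᵀ * X34 * D4)
         (D4ᵀ * X41 * D1) (D4ᵀ * X42 * D2) (D4ᵀ * X43 * D3) (D4ᵀ * X44 * D4) := by
  simp [dg4, blk4, blk3, fromBlocks_transpose, fromBlocks_multiply, mul_fromCols, fromRows_mul,
    fromCols_mul_fromBlocks, fromBlocks_mul_fromRows, fromCols_mul_fromRows,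
    fromRows_mul_fromCols, transpose_fromCols, transpose_fromRows, Matrix.mul_assoc]

theorem isUnit_dg3 [DecidableEq i1] [DecidableEq i2] [DecidableEq i3]
    {D1 : Matrix i1 i1 ℝ} {D2 : Matrix i2 i2 ℝ} {D3 : Matrix i3 i3 ℝ}
    (h1 : IsUnit D1) (h2 : IsUnit D2) (h3 : IsUnit D3) : IsUnit (dg3 D1 D2 D3) := by
  rw [dg3, Matrix.isUnit_iff_isUnit_det, Matrix.det_fromBlocks_zero₂₁,
    Matrix.det_fromBlocks_zero₂₁]
  exact ((Matrix.isUnit_iff_isUnit_det _).mp h1).mul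
    (((Matrix.isUnit_iff_isUnit_det _).mp h2).mul ((Matrix.isUnit_iff_isUnit_det _).mp h3))

theorem isUnit_dg4 [DecidableEq i1] [DecidableEq i2] [DecidableEq i3] [DecidableEq i4]
    {D1 : Matrix i1 i1 ℝ} {D2 : Matrix i2 i2 ℝ} {D3 : Matrix i3 i3 ℝ} {D4 : Matrix i4 i4 ℝ}
    (h1 : IsUnit D1) (h2 : IsUnit D2) (h3 : IsUnit D3) (h4 : IsUnit D4) :
    IsUnit (dg4 D1 D2 D3 D4) := by
  rw [dg4, Matrix.isUnit_iff_isUnit_det, Matrix.det_fromBlocks_zero₂₁,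
    Matrix.det_fromBlocks_zero₂₁, Matrix.det_fromBlocks_zero₂₁]
  exact ((Matrix.isUnit_iff_isUnit_det _).mp h1).mul
    (((Matrix.isUnit_iff_isUnit_det _).mp h2).mul
      (((Matrix.isUnit_iff_isUnit_det _).mp h3).mul ((Matrix.isUnit_iff_isUnit_det _).mp h4)))

theorem posSemidef_corner {rest : Type*} [Fintype rest] [DecidableEq i1]
    {A : Matrix i1 i1 ℝ} (hA : A.PosSemidef) :
    (fromBlocks A 0 0 (0 : Matrix rest rest ℝ)).PosSemidef := by
  have h := hA.conjTranspose_mul_mul_same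
    (fromCols (1 : Matrix i1 i1 ℝ) (0 : Matrix i1 rest ℝ))
  rw [conjTranspose_eq_transpose_of_trivial, transpose_fromCols] at h
  rw [fromRows_mul, fromRows_mul_fromCols] at h
  simpa using h

theorem blk4_sub_corner {j1 j2 j3 j4 : Type*}
    (A11 : Matrix i1 j1 ℝ) (A12 : Matrix i1 j2 ℝ) (A13 : Matrix i1 j3 ℝ) (A14 : Matrix i1 j4 ℝ)
    (A21 : Matrix i2 j1 ℝ) (A22 : Matrix i2 j2 ℝ) (A23 : Matrix i2 j3 ℝ) (A24 : Matrix i2 j4 ℝ)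
    (A31 : Matrix i3 j1 ℝ) (A32 : Matrix i3 j2 ℝ) (A33 : Matrix i3 j3 ℝ) (A34 : Matrix i3 j4 ℝ)
    (A41 : Matrix i4 j1 ℝ) (A42 : Matrix i4 j2 ℝ) (A43 : Matrix i4 j3 ℝ) (A44 : Matrix i4 j4 ℝ)
    (D : Matrix i1 j1 ℝ) :
    blk4 (A11 - D) A12 A13 A14 A21 A22 A23 A24 A31 A32 A33 A34 A41 A42 A43 A44 =
    blk4 A11 A12 A13 A14 A21 A22 A23 A24 A31 A32 A33 A34 A41 A42 A43 A44
      - fromBlocks D 0 0 0 := by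
  ext (i | i | i | i) (j | j | j | j) <;>
    simp [blk4, blk3, fromBlocks, fromCols, fromRows]

end SOFAux

/-- Singular-filtering static output-feedback synthesis (`D_yw = 0`, `C_y` of full row rank
normalized by `T_y`): feasibility of the slack-variable synthesis LMIs with structured
`R̄ = diag(R̄₁, R̄₂)` and `M = [M₁, 0]` yields the analysis LMIs for the closed-loop realization
with static gain `K = M₁R̄₁⁻¹`, `Π = T_y⁻¹ Π̄ T_y^{−ᵀ}` and `Φ = Π⁻¹`. The state space is
indexed by `Fin r ⊕ Fin k` (so `n = r + k`). -/
theorem singular_filtering_sof_synthesis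
    (k q r m p : ℕ)
    (A : Matrix (Fin r ⊕ Fin k) (Fin r ⊕ Fin k) ℝ)
    (Bw : Matrix (Fin r ⊕ Fin k) (Fin m) ℝ)
    (Bu : Matrix (Fin r ⊕ Fin k) (Fin q) ℝ)
    (Cz : Matrix (Fin p) (Fin r ⊕ Fin k) ℝ)
    (Dzw : Matrix (Fin p) (Fin m) ℝ)
    (Dzu : Matrix (Fin p) (Fin q) ℝ)
    (Cy : Matrix (Fin r) (Fin r ⊕ Fin k) ℝ)
    (Ty : Matrix (Fin r ⊕ Fin k) (Fin r ⊕ Fin k) ℝ) (hTy : IsUnit Ty)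
    (hCyTy : Cy * Ty⁻¹ =
      fromCols (1 : Matrix (Fin r) (Fin r) ℝ) (0 : Matrix (Fin r) (Fin k) ℝ))
    (Abar : Matrix (Fin r ⊕ Fin k) (Fin r ⊕ Fin k) ℝ) (hAbar : Abar = Ty * A * Ty⁻¹)
    (Bwbar : Matrix (Fin r ⊕ Fin k) (Fin m) ℝ) (hBwbar : Bwbar = Ty * Bw)
    (Bubar : Matrix (Fin r ⊕ Fin k) (Fin q) ℝ) (hBubar : Bubar = Ty * Bu)
    (Czbar : Matrix (Fin p) (Fin r ⊕ Fin k) ℝ) (hCzbar : Czbar = Cz * Ty⁻¹)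
    (η : ℝ) (Ψ : Matrix (Fin m) (Fin m) ℝ) (hΨs : Ψ.IsSymm) (hΨ : Ψ.PosDef)
    (Pibar : Matrix (Fin r ⊕ Fin k) (Fin r ⊕ Fin k) ℝ) (hPibars : Pibar.IsSymm)
    (hPibar : Pibar.PosDef)
    (R1 : Matrix (Fin r) (Fin r) ℝ) (hR1 : IsUnit R1)
    (R2 : Matrix (Fin k) (Fin k) ℝ) (hR2 : IsUnit R2)
    (Rbar : Matrix (Fin r ⊕ Fin k) (Fin r ⊕ Fin k) ℝ) (hRbar : Rbar = fromBlocks R1 0 0 R2)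
    (M1 : Matrix (Fin q) (Fin r) ℝ)
    (M : Matrix (Fin q) (Fin r ⊕ Fin k) ℝ)
    (hM : M = fromCols M1 (0 : Matrix (Fin q) (Fin k) ℝ))
    (h1 : (blk3 (Ψ - η • 1) Bwbarᵀ Dzwᵀ
                Bwbar (-Pibar) 0
                Dzw 0 (-1)).NegDef)
    (h2 : (blk4 (Pibar - Rbar - Rbarᵀ) 0 (Abar * Rbar + Bubar * M)ᵀ
                  (Czbar * Rbar + Dzu * M)ᵀ
                0 ((-η) • 1 : Matrix (Fin m) (Fin m) ℝ) Bwbarᵀ Dzwᵀ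
                (Abar * Rbar + Bubar * M) Bwbar (-Pibar) 0
                (Czbar * Rbar + Dzu * M) Dzw 0 (-1)).NegDef)
    (K : Matrix (Fin q) (Fin r) ℝ) (hK : K = M1 * R1⁻¹)
    (Pi : Matrix (Fin r ⊕ Fin k) (Fin r ⊕ Fin k) ℝ) (hPidef : Pi = Ty⁻¹ * Pibar * (Tyᵀ)⁻¹)
    (Φ : Matrix (Fin r ⊕ Fin k) (Fin r ⊕ Fin k) ℝ) (hΦ : Φ = Pi⁻¹)
    (𝒜 : Matrix (Fin r ⊕ Fin k) (Fin r ⊕ Fin k) ℝ) (h𝒜 : 𝒜 = A + Bu * K * Cy)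
    (ℬ : Matrix (Fin r ⊕ Fin k) (Fin m) ℝ) (hℬ : ℬ = Bw)
    (𝒞 : Matrix (Fin p) (Fin r ⊕ Fin k) ℝ) (h𝒞 : 𝒞 = Cz + Dzu * K * Cy)
    (𝒟 : Matrix (Fin p) (Fin m) ℝ) (h𝒟 : 𝒟 = Dzw) :
    Φ.IsSymm ∧ Φ.PosDef ∧
    (blk3 (Ψ - η • 1) ℬᵀ 𝒟ᵀ
          ℬ (-Φ⁻¹) 0
          𝒟 0 (-1)).NegDef ∧
    (blk4 (-Φ) 0 𝒜ᵀ 𝒞ᵀ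
          0 ((-η) • 1 : Matrix (Fin m) (Fin m) ℝ) ℬᵀ 𝒟ᵀ
          𝒜 ℬ (-Φ⁻¹) 0
          𝒞 𝒟 0 (-1)).NegDef := by
  -- basic invertibility facts
  have hdT : IsUnit Ty.det := (Matrix.isUnit_iff_isUnit_det Ty).mp hTy
  have hTyT : IsUnit Tyᵀ := by
    rw [Matrix.isUnit_iff_isUnit_det, Matrix.det_transpose]; exact hdT
  have hdTT : IsUnit (Tyᵀ).det := (Matrix.isUnit_iff_isUnit_det _).mp hTyT
  have hTiT : IsUnit (Tyᵀ)⁻¹ := Matrix.isUnit_nonsing_inv_iff.mpr hTyT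
  have e1 : Ty⁻¹ * Ty = 1 := Matrix.nonsing_inv_mul Ty hdT
  have e2 : Ty * Ty⁻¹ = 1 := Matrix.mul_nonsing_inv Ty hdT
  have e3 : Tyᵀ * (Tyᵀ)⁻¹ = 1 := Matrix.mul_nonsing_inv _ hdTT
  have e4 : (Tyᵀ)⁻¹ * Tyᵀ = 1 := Matrix.nonsing_inv_mul _ hdTT
  have eT : ((Tyᵀ)⁻¹)ᵀ = Ty⁻¹ := by
    rw [← Matrix.transpose_nonsing_inv, Matrix.transpose_transpose]
  -- Pi and Φ
  have hPi : Pi.PosDef := by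
    have h := SOFAux.posDef_congr hPibar hTiT
    rw [eT] at h
    rwa [← hPidef] at h
  have hdPi : IsUnit Pi.det := (Matrix.isUnit_iff_isUnit_det _).mp hPi.isUnit
  have hPhiPD : Φ.PosDef := hΦ ▸ hPi.inv
  have hPhiS : Φ.IsSymm := by
    have h := hPhiPD.1
    rw [Matrix.IsHermitian, conjTranspose_eq_transpose_of_trivial] at h
    exact h
  have hPhiInv : Φ⁻¹ = Pi := by rw [hΦ, Matrix.nonsing_inv_nonsing_inv _ hdPi]
  have hPibarEq : Pibar = Ty * Pi * Tyᵀ := by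
    rw [hPidef]
    simp [Matrix.mul_assoc, e4, Matrix.mul_nonsing_inv_cancel_left _ _ hdT]
  have hdPibar : IsUnit Pibar.det := (Matrix.isUnit_iff_isUnit_det _).mp hPibar.isUnit
  have ePibar1 : Pibar * Pibar⁻¹ = 1 := Matrix.mul_nonsing_inv _ hdPibar
  have ePibar2 : Pibar⁻¹ * Pibar = 1 := Matrix.nonsing_inv_mul _ hdPibar
  have hTPT : Tyᵀ * Pibar⁻¹ * Ty = Φ := by
    rw [hPibarEq, Matrix.mul_inv_rev, Matrix.mul_inv_rev, hΦ]
    simp [Matrix.mul_assoc, e1, Matrix.mul_nonsing_inv_cancel_left _ _ hdTT]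
  -- Rbar facts
  have hdR1 : IsUnit R1.det := (Matrix.isUnit_iff_isUnit_det _).mp hR1
  have hdR2 : IsUnit R2.det := (Matrix.isUnit_iff_isUnit_det _).mp hR2
  have hRu : IsUnit Rbar := by
    rw [hRbar, Matrix.isUnit_iff_isUnit_det, Matrix.det_fromBlocks_zero₂₁]
    exact hdR1.mul hdR2
  have hdR : IsUnit Rbar.det := (Matrix.isUnit_iff_isUnit_det _).mp hRu
  have hdRT : IsUnit (Rbarᵀ).det := by rwa [Matrix.det_transpose]
  have hRinv : Rbar⁻¹ = fromBlocks R1⁻¹ 0 0 R2⁻¹ := by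
    apply Matrix.inv_eq_right_inv
    rw [hRbar]
    simp [fromBlocks_multiply, Matrix.mul_nonsing_inv _ hdR1, Matrix.mul_nonsing_inv _ hdR2,
      fromBlocks_one]
  have eR1 : Rbar * (Rbar⁻¹ * Ty) = Ty := Matrix.mul_nonsing_inv_cancel_left _ _ hdR
  have hMR : M * Rbar⁻¹ = K * (Cy * Ty⁻¹) := by
    rw [hM, hRinv, hCyTy, hK, fromCols_mul_fromBlocks, mul_fromCols]
    simp
  have hMRT : M * (Rbar⁻¹ * Ty) = K * Cy := by
    rw [← Matrix.mul_assoc, hMR]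
    simp [Matrix.mul_assoc, e1]
  -- closed-loop identities
  have hAcl : (Abar * Rbar + Bubar * M) * (Rbar⁻¹ * Ty) = Ty * 𝒜 := by
    rw [Matrix.add_mul, hAbar, hBubar, h𝒜]
    have p1 : Ty * A * Ty⁻¹ * Rbar * (Rbar⁻¹ * Ty) = Ty * A := by
      simp [Matrix.mul_assoc, eR1, e1]
    have p2 : Ty * Bu * M * (Rbar⁻¹ * Ty) = Ty * (Bu * (K * Cy)) := by
      simp [Matrix.mul_assoc, hMRT]
    rw [p1, p2, Matrix.mul_add]
    simp [Matrix.mul_assoc]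
  have hCcl : (Czbar * Rbar + Dzu * M) * (Rbar⁻¹ * Ty) = 𝒞 := by
    rw [Matrix.add_mul, hCzbar, h𝒞]
    have p1 : Cz * Ty⁻¹ * Rbar * (Rbar⁻¹ * Ty) = Cz := by
      simp [Matrix.mul_assoc, eR1, e1]
    have p2 : Dzu * M * (Rbar⁻¹ * Ty) = Dzu * (K * Cy) := by
      simp [Matrix.mul_assoc, hMRT]
    rw [p1, p2]
    simp [Matrix.mul_assoc]
  -- common bar-block identities
  have hBwT : Bwbarᵀ * (Tyᵀ)⁻¹ = ℬᵀ := by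
    rw [hBwbar, hℬ, Matrix.transpose_mul, Matrix.mul_assoc, e3, Matrix.mul_one]
  have hBwL : Ty⁻¹ * Bwbar = ℬ := by
    rw [hBwbar, hℬ, ← Matrix.mul_assoc, e1, Matrix.one_mul]
  have hPP : Ty⁻¹ * -Pibar * (Tyᵀ)⁻¹ = -Φ⁻¹ := by
    rw [hPhiInv, hPidef]
    simp [Matrix.mul_neg, Matrix.neg_mul]
  -- first LMI
  have hL1 : IsUnit (SOFAux.dg3 (1 : Matrix (Fin m) (Fin m) ℝ) ((Tyᵀ)⁻¹)
      (1 : Matrix (Fin p) (Fin p) ℝ)) :=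
    SOFAux.isUnit_dg3 isUnit_one hTiT isUnit_one
  have c1 := SOFAux.negDef_congr h1 hL1
  rw [SOFAux.dg3_congr] at c1
  simp only [Matrix.transpose_one, Matrix.one_mul, Matrix.mul_one, Matrix.mul_zero,
    Matrix.zero_mul, eT] at c1
  rw [hBwT, hBwL, hPP, ← h𝒟] at c1
  -- second LMI, step A: replace (1,1) block
  have hΔps : ((Rbar - Pibar)ᵀ * Pibar⁻¹ * (Rbar - Pibar)).PosSemidef := by
    have h := (hPibar.inv).posSemidef.conjTranspose_mul_mul_same (Rbar - Pibar)
    rwa [conjTranspose_eq_transpose_of_trivial] at h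
  have hdelta : Pibar - Rbar - Rbarᵀ - (Rbar - Pibar)ᵀ * Pibar⁻¹ * (Rbar - Pibar) =
      -(Rbarᵀ * (Pibar⁻¹ * Rbar)) := by
    have hsym : Pibarᵀ = Pibar := hPibars.eq
    simp only [Matrix.transpose_sub, hsym, Matrix.sub_mul, Matrix.mul_sub,
      Matrix.mul_assoc, ePibar2, Matrix.mul_one,
      Matrix.mul_nonsing_inv_cancel_left _ _ hdPibar]
    abel
  have hsub := SOFAux.blk4_sub_corner (Pibar - Rbar - Rbarᵀ) 0 (Abar * Rbar + Bubar * M)ᵀ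
    (Czbar * Rbar + Dzu * M)ᵀ 0 ((-η) • 1 : Matrix (Fin m) (Fin m) ℝ) Bwbarᵀ Dzwᵀ
    (Abar * Rbar + Bubar * M) Bwbar (-Pibar) 0 (Czbar * Rbar + Dzu * M) Dzw 0 (-1)
    ((Rbar - Pibar)ᵀ * Pibar⁻¹ * (Rbar - Pibar))
  have c2 : (blk4 (-(Rbarᵀ * (Pibar⁻¹ * Rbar))) 0 (Abar * Rbar + Bubar * M)ᵀ
      (Czbar * Rbar + Dzu * M)ᵀ 0 ((-η) • 1 : Matrix (Fin m) (Fin m) ℝ) Bwbarᵀ Dzwᵀ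
      (Abar * Rbar + Bubar * M) Bwbar (-Pibar) 0
      (Czbar * Rbar + Dzu * M) Dzw 0 (-1)).NegDef := by
    rw [← hdelta]
    unfold Matrix.NegDef
    rw [hsub, neg_sub, sub_eq_add_neg]
    exact Matrix.PosDef.posSemidef_add (SOFAux.posSemidef_corner hΔps) h2
  -- second LMI, step B: congruence
  have hRiu : IsUnit Rbar⁻¹ := Matrix.isUnit_nonsing_inv_iff.mpr hRu
  have hL2 : IsUnit (SOFAux.dg4 (Rbar⁻¹ * Ty) (1 : Matrix (Fin m) (Fin m) ℝ) ((Tyᵀ)⁻¹)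
      (1 : Matrix (Fin p) (Fin p) ℝ)) :=
    SOFAux.isUnit_dg4 (hRiu.mul hTy) isUnit_one hTiT isUnit_one
  have c3 := SOFAux.negDef_congr c2 hL2
  rw [SOFAux.dg4_congr] at c3
  simp only [Matrix.transpose_one, Matrix.one_mul, Matrix.mul_one, Matrix.mul_zero,
    Matrix.zero_mul, eT] at c3
  have b11 : (Rbar⁻¹ * Ty)ᵀ * -(Rbarᵀ * (Pibar⁻¹ * Rbar)) * (Rbar⁻¹ * Ty) = -Φ := by
    rw [← hTPT]
    simp [Matrix.transpose_mul, Matrix.transpose_nonsing_inv, Matrix.mul_neg, Matrix.neg_mul,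
      Matrix.mul_assoc, eR1, Matrix.nonsing_inv_mul_cancel_left _ _ hdRT]
  have b13 : (Rbar⁻¹ * Ty)ᵀ * (Abar * Rbar + Bubar * M)ᵀ * (Tyᵀ)⁻¹ = 𝒜ᵀ := by
    rw [← Matrix.transpose_mul, hAcl, Matrix.transpose_mul, Matrix.mul_assoc, e3,
      Matrix.mul_one]
  have b14 : (Rbar⁻¹ * Ty)ᵀ * (Czbar * Rbar + Dzu * M)ᵀ = 𝒞ᵀ := by
    rw [← Matrix.transpose_mul, hCcl]
  have b31 : Ty⁻¹ * (Abar * Rbar + Bubar * M) * (Rbar⁻¹ * Ty) = 𝒜 := by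
    rw [Matrix.mul_assoc, hAcl, ← Matrix.mul_assoc, e1, Matrix.one_mul]
  rw [b11, b13, b14, b31, hCcl, hBwT, hBwL, hPP, ← h𝒟] at c3
  exact ⟨hPhiS, hPhiPD, c1, c3⟩
end
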